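/- arXiv:1709.03893 — 4 statements merged into one kernel-verified Lean document; each statement's English description precedes it below -/
import Mathlib

section
/- Let H be a separable complex Hilbert space and let x, y : ℤ → H form a pair of dual Riesz bases for H. Then the family consisting of (n ↦ x_{3n} − x_{3n−1}), (n ↦ x_{3n}), and (n ↦ x_{3n+1} − x_{3n}) is a Riesz basis for H whose dual Riesz basis is (n ↦ −y_{3n−1}), (n ↦ y_{3n−1} + y_{3n} + y_{3n+1}), and (n ↦ y_{3n+1}) respectively; in particular, for every F ∈ H the family over (k,n) ∈ Fin 3 × ℤ whose terms are ⟨F, x_{3n} − x_{3n−1}⟩(−y_{3n−1}) for k = 0, ⟨F, x_{3n}⟩(y_{3n−1} + y_{3n} + y_{3n+1}) for k = 1, and ⟨F, x_{3n+1} − x_{3n}⟩ y_{3n+1} for k = 2, has sum F (unconditional convergence in H). -/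
noncomputable section
open scoped Classical

local notation "⟪" f ", " g "⟫" => @inner ℂ _ _ g f

/-- A family `x : ι → H` is a Riesz basis for `H` if it is the image of a Hilbert
(orthonormal) basis of `H` under a continuous linear equivalence of `H`. -/
def IsRieszBasis {H : Type*} [NormedAddCommGroup H] [InnerProductSpace ℂ H]
    {ι : Type*} (x : ι → H) : Prop :=
  ∃ (e : HilbertBasis ι ℂ H) (T : H ≃L[ℂ] H), ∀ i, x i = T (e i)

/-- Families `x, y : ι → H` form a pair of dual Riesz bases: both are Riesz bases,
they are biorthogonal, and `∑ᵢ ⟨f, yᵢ⟩ xᵢ = f` for every `f` (inner product linear in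
the first argument, conjugate-linear in the second). -/
def IsDualRieszBasisPair {H : Type*} [NormedAddCommGroup H] [InnerProductSpace ℂ H]
    {ι : Type*} (x y : ι → H) : Prop :=
  IsRieszBasis x ∧ IsRieszBasis y ∧
    (∀ i j, ⟪x i, y j⟫ = if i = j then (1 : ℂ) else 0) ∧
    ∀ f : H, HasSum (fun i => ⟪f, y i⟫ • x i) f



namespace Stmt14Aux

open Submodule ContinuousLinearMap

local notation "⟪" a ", " b "⟫ₘ" => @inner ℂ _ _ a b

variable {H : Type*} [NormedAddCommGroup H] [InnerProductSpace ℂ H] [CompleteSpace H]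

/-- Reindex a Hilbert basis along a bijection. -/
def reBasis {ι : Type*} (e : HilbertBasis ℤ ℂ H) (σ : ι → ℤ)
    (hinj : Function.Injective σ) (hsurj : Function.Surjective σ) : HilbertBasis ι ℂ H :=
  HilbertBasis.mk (e.orthonormal.comp σ hinj)
    (by
      have h : Set.range (⇑e ∘ σ) = Set.range ⇑e := by
        rw [Set.range_comp, hsurj.range_eq, Set.image_univ]
      rw [h, e.dense_span])

lemma reBasis_apply {ι : Type*} (e : HilbertBasis ℤ ℂ H) (σ : ι → ℤ)
    (hinj : Function.Injective σ) (hsurj : Function.Surjective σ) (i : ι) :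
    reBasis e σ hinj hsurj i = e (σ i) := by
  have h := HilbertBasis.coe_mk (e.orthonormal.comp σ hinj)
    (by
      have h : Set.range (⇑e ∘ σ) = Set.range ⇑e := by
        rw [Set.range_comp, hsurj.range_eq, Set.image_univ]
      rw [h, e.dense_span])
  exact congrFun h i

def shiftB (e : HilbertBasis ℤ ℂ H) (c : ℤ) : HilbertBasis ℤ ℂ H :=
  reBasis e (fun j => j + c) (add_left_injective c) (fun m => ⟨m - c, by ring⟩)

lemma shiftB_apply (e : HilbertBasis ℤ ℂ H) (c j : ℤ) : shiftB e c j = e (j + c) :=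
  reBasis_apply e _ _ _ j

def shiftCLM (e : HilbertBasis ℤ ℂ H) (c : ℤ) : H →L[ℂ] H :=
  ((e.repr.trans (shiftB e c).repr.symm).toContinuousLinearEquiv : H →L[ℂ] H)

lemma shiftCLM_apply (e : HilbertBasis ℤ ℂ H) (c j : ℤ) :
    shiftCLM e c (e j) = e (j + c) := by
  have : shiftCLM e c (e j) = (shiftB e c).repr.symm (e.repr (e j)) := rfl
  rw [this, e.repr_self, HilbertBasis.repr_symm_single, shiftB_apply]

end Stmt14Aux

noncomputable section
namespace Stmt14Aux
open Submodule ContinuousLinearMap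
variable {H : Type*} [NormedAddCommGroup H] [InnerProductSpace ℂ H] [CompleteSpace H]

local notation "⟪" a ", " b "⟫ₘ" => @inner ℂ _ _ a b

lemma einner (e : HilbertBasis ℤ ℂ H) (a b : ℤ) :
    ⟪e a, e b⟫ₘ = if a = b then (1 : ℂ) else 0 :=
  orthonormal_iff_ite.mp e.orthonormal a b

def KS (e : HilbertBasis ℤ ℂ H) (r : ℤ) : Submodule ℂ H :=
  (span ℂ (Set.range fun n : ℤ => e (3 * n + r))).topologicalClosure

instance (e : HilbertBasis ℤ ℂ H) (r : ℤ) : CompleteSpace (KS e r) :=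
  (Submodule.isClosed_topologicalClosure _).completeSpace_coe

def projCLM (e : HilbertBasis ℤ ℂ H) (r : ℤ) : H →L[ℂ] H :=
  (KS e r).subtypeL.comp (orthogonalProjection (KS e r))

lemma projCLM_self (e : HilbertBasis ℤ ℂ H) (r m : ℤ) (hm : ∃ n, m = 3 * n + r) :
    projCLM e r (e m) = e m := by
  obtain ⟨n, rfl⟩ := hm
  have hmem : e (3 * n + r) ∈ KS e r :=
    (span ℂ _).le_topologicalClosure (subset_span ⟨n, rfl⟩)
  exact (KS e r).starProjection_eq_self_iff.mpr hmem

lemma projCLM_zero (e : HilbertBasis ℤ ℂ H) (r m : ℤ) (hm : ∀ n : ℤ, m ≠ 3 * n + r) :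
    projCLM e r (e m) = 0 := by
  have hker : KS e r ≤ (innerSL ℂ (e m)).ker := by
    refine Submodule.topologicalClosure_minimal _ (span_le.mpr ?_)
      (ContinuousLinearMap.isClosed_ker (innerSL ℂ (e m)))
    rintro v ⟨n, rfl⟩
    simp only [SetLike.mem_coe, LinearMap.mem_ker]
    show ⟪e m, e (3 * n + r)⟫ₘ = 0
    rw [einner, if_neg (hm n)]
  have hperp : e m ∈ (KS e r)ᗮ := by
    rw [Submodule.mem_orthogonal]
    intro u hu
    have h0 : ⟪e m, u⟫ₘ = 0 := hker hu
    rw [← inner_conj_symm, h0, map_zero]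
  have := orthogonalProjection_mem_subspace_orthogonalComplement_eq_zero hperp
  show ((orthogonalProjection (KS e r)) (e m) : H) = 0
  rw [this]; rfl

def triOp (e : HilbertBasis ℤ ℂ H) (f g h : H →L[ℂ] H) : H →L[ℂ] H :=
  f.comp (projCLM e (-1)) + g.comp (projCLM e 0) + h.comp (projCLM e 1)

lemma triOp_m1 (e : HilbertBasis ℤ ℂ H) (f g h : H →L[ℂ] H) (m : ℤ)
    (hm : ∃ n, m = 3 * n + -1) : triOp e f g h (e m) = f (e m) := by
  have h0 : ∀ n : ℤ, m ≠ 3 * n + 0 := by obtain ⟨n, rfl⟩ := hm; omega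
  have h1 : ∀ n : ℤ, m ≠ 3 * n + 1 := by obtain ⟨n, rfl⟩ := hm; omega
  simp [triOp, projCLM_self e (-1) m hm, projCLM_zero e 0 m h0, projCLM_zero e 1 m h1]

lemma triOp_0 (e : HilbertBasis ℤ ℂ H) (f g h : H →L[ℂ] H) (m : ℤ)
    (hm : ∃ n, m = 3 * n + 0) : triOp e f g h (e m) = g (e m) := by
  have hm1 : ∀ n : ℤ, m ≠ 3 * n + -1 := by obtain ⟨n, rfl⟩ := hm; omega
  have h1 : ∀ n : ℤ, m ≠ 3 * n + 1 := by obtain ⟨n, rfl⟩ := hm; omega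
  simp [triOp, projCLM_self e 0 m hm, projCLM_zero e (-1) m hm1, projCLM_zero e 1 m h1]

lemma triOp_1 (e : HilbertBasis ℤ ℂ H) (f g h : H →L[ℂ] H) (m : ℤ)
    (hm : ∃ n, m = 3 * n + 1) : triOp e f g h (e m) = h (e m) := by
  have hm1 : ∀ n : ℤ, m ≠ 3 * n + -1 := by obtain ⟨n, rfl⟩ := hm; omega
  have h0 : ∀ n : ℤ, m ≠ 3 * n + 0 := by obtain ⟨n, rfl⟩ := hm; omega
  simp [triOp, projCLM_self e 1 m hm, projCLM_zero e (-1) m hm1, projCLM_zero e 0 m h0]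

end Stmt14Aux

noncomputable section
namespace Stmt14Aux
open Submodule ContinuousLinearMap
variable {H : Type*} [NormedAddCommGroup H] [InnerProductSpace ℂ H] [CompleteSpace H]
local notation "⟪" a ", " b "⟫ₘ" => @inner ℂ _ _ a b

def opA (e : HilbertBasis ℤ ℂ H) : H →L[ℂ] H :=
  triOp e (shiftCLM e 1 - 1) 1 (1 - shiftCLM e (-1))
def opA' (e : HilbertBasis ℤ ℂ H) : H →L[ℂ] H :=
  triOp e (shiftCLM e 1 - 1) 1 (1 + shiftCLM e (-1))
def opC (e : HilbertBasis ℤ ℂ H) : H →L[ℂ] H :=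
  triOp e (-1) (shiftCLM e (-1) + 1 + shiftCLM e 1) 1
def opC' (e : HilbertBasis ℤ ℂ H) : H →L[ℂ] H :=
  triOp e (-1) (shiftCLM e (-1) + 1 - shiftCLM e 1) 1

variable (e : HilbertBasis ℤ ℂ H) (m : ℤ)

lemma opA_m1 (hm : ∃ n, m = 3 * n + -1) : opA e (e m) = e (m + 1) - e m := by
  rw [opA, triOp_m1 e _ _ _ m hm]
  simp [shiftCLM_apply]
lemma opA_0 (hm : ∃ n, m = 3 * n + 0) : opA e (e m) = e m := by
  rw [opA, triOp_0 e _ _ _ m hm]; simp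
lemma opA_1 (hm : ∃ n, m = 3 * n + 1) : opA e (e m) = e m - e (m + -1) := by
  rw [opA, triOp_1 e _ _ _ m hm]; simp [shiftCLM_apply]

lemma opA'_m1 (hm : ∃ n, m = 3 * n + -1) : opA' e (e m) = e (m + 1) - e m := by
  rw [opA', triOp_m1 e _ _ _ m hm]; simp [shiftCLM_apply]
lemma opA'_0 (hm : ∃ n, m = 3 * n + 0) : opA' e (e m) = e m := by
  rw [opA', triOp_0 e _ _ _ m hm]; simp
lemma opA'_1 (hm : ∃ n, m = 3 * n + 1) : opA' e (e m) = e m + e (m + -1) := by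
  rw [opA', triOp_1 e _ _ _ m hm]; simp [shiftCLM_apply]

lemma opC_m1 (hm : ∃ n, m = 3 * n + -1) : opC e (e m) = -e m := by
  rw [opC, triOp_m1 e _ _ _ m hm]; simp
lemma opC_0 (hm : ∃ n, m = 3 * n + 0) :
    opC e (e m) = e (m + -1) + e m + e (m + 1) := by
  rw [opC, triOp_0 e _ _ _ m hm]; simp [shiftCLM_apply]
lemma opC_1 (hm : ∃ n, m = 3 * n + 1) : opC e (e m) = e m := by
  rw [opC, triOp_1 e _ _ _ m hm]; simp

lemma opC'_m1 (hm : ∃ n, m = 3 * n + -1) : opC' e (e m) = -e m := by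
  rw [opC', triOp_m1 e _ _ _ m hm]; simp
lemma opC'_0 (hm : ∃ n, m = 3 * n + 0) :
    opC' e (e m) = e (m + -1) + e m - e (m + 1) := by
  rw [opC', triOp_0 e _ _ _ m hm]; simp [shiftCLM_apply]
lemma opC'_1 (hm : ∃ n, m = 3 * n + 1) : opC' e (e m) = e m := by
  rw [opC', triOp_1 e _ _ _ m hm]; simp

lemma tri3 : (∃ n, m = 3 * n + -1) ∨ (∃ n, m = 3 * n + 0) ∨ (∃ n, m = 3 * n + 1) := by
  have h3 : m % 3 = 0 ∨ m % 3 = 1 ∨ m % 3 = 2 := by omega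
  rcases h3 with h | h | h
  · exact Or.inr (Or.inl ⟨m / 3, by omega⟩)
  · exact Or.inr (Or.inr ⟨m / 3, by omega⟩)
  · exact Or.inl ⟨m / 3 + 1, by omega⟩

lemma eq_id_of_basis (f : H →L[ℂ] H) (hf : ∀ m, f (e m) = e m) :
    f = ContinuousLinearMap.id ℂ H := by
  refine ContinuousLinearMap.ext_on
    (Submodule.dense_iff_topologicalClosure_eq_top.mpr e.dense_span) ?_
  rintro v ⟨m, rfl⟩
  exact hf m

lemma opA'_opA : ∀ v, opA' e (opA e v) = v := by
  have h := eq_id_of_basis e ((opA' e).comp (opA e)) (fun m => by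
    rw [ContinuousLinearMap.comp_apply]
    rcases tri3 m with hm | hm | hm
    · rw [opA_m1 e m hm, map_sub, opA'_0 e (m + 1) (by obtain ⟨n, rfl⟩ := hm; exact ⟨n, by ring⟩),
        opA'_m1 e m hm]
      abel
    · rw [opA_0 e m hm, opA'_0 e m hm]
    · rw [opA_1 e m hm, map_sub, opA'_1 e m hm,
        opA'_0 e (m + -1) (by obtain ⟨n, rfl⟩ := hm; exact ⟨n, by ring⟩)]
      abel)
  intro v
  exact DFunLike.congr_fun h v

lemma opA_opA' : ∀ v, opA e (opA' e v) = v := by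
  have h := eq_id_of_basis e ((opA e).comp (opA' e)) (fun m => by
    rw [ContinuousLinearMap.comp_apply]
    rcases tri3 m with hm | hm | hm
    · rw [opA'_m1 e m hm, map_sub, opA_0 e (m + 1) (by obtain ⟨n, rfl⟩ := hm; exact ⟨n, by ring⟩),
        opA_m1 e m hm]
      abel
    · rw [opA'_0 e m hm, opA_0 e m hm]
    · rw [opA'_1 e m hm, map_add, opA_1 e m hm,
        opA_0 e (m + -1) (by obtain ⟨n, rfl⟩ := hm; exact ⟨n, by ring⟩)]
      abel)
  intro v
  exact DFunLike.congr_fun h v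

lemma opC'_opC : ∀ v, opC' e (opC e v) = v := by
  have h := eq_id_of_basis e ((opC' e).comp (opC e)) (fun m => by
    rw [ContinuousLinearMap.comp_apply]
    rcases tri3 m with hm | hm | hm
    · rw [opC_m1 e m hm, map_neg, opC'_m1 e m hm, neg_neg]
    · rw [opC_0 e m hm, map_add, map_add,
        opC'_m1 e (m + -1) (by obtain ⟨n, rfl⟩ := hm; exact ⟨n, by ring⟩),
        opC'_0 e m hm, opC'_1 e (m + 1) (by obtain ⟨n, rfl⟩ := hm; exact ⟨n, by ring⟩)]
      abel
    · rw [opC_1 e m hm, opC'_1 e m hm])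
  intro v
  exact DFunLike.congr_fun h v

lemma opC_opC' : ∀ v, opC e (opC' e v) = v := by
  have h := eq_id_of_basis e ((opC e).comp (opC' e)) (fun m => by
    rw [ContinuousLinearMap.comp_apply]
    rcases tri3 m with hm | hm | hm
    · rw [opC'_m1 e m hm, map_neg, opC_m1 e m hm, neg_neg]
    · rw [opC'_0 e m hm, map_sub, map_add,
        opC_m1 e (m + -1) (by obtain ⟨n, rfl⟩ := hm; exact ⟨n, by ring⟩),
        opC_0 e m hm, opC_1 e (m + 1) (by obtain ⟨n, rfl⟩ := hm; exact ⟨n, by ring⟩)]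
      abel
    · rw [opC'_1 e m hm, opC_1 e m hm])
  intro v
  exact DFunLike.congr_fun h v

def eqvA : H ≃L[ℂ] H :=
  ContinuousLinearEquiv.equivOfInverse (opA e) (opA' e) (opA'_opA e) (opA_opA' e)

def eqvC : H ≃L[ℂ] H :=
  ContinuousLinearEquiv.equivOfInverse (opC e) (opC' e) (opC'_opC e) (opC_opC' e)

@[simp] lemma eqvA_apply (v : H) : eqvA e v = opA e v := rfl
@[simp] lemma eqvC_apply (v : H) : eqvC e v = opC e v := rfl

end Stmt14Aux

noncomputable section
open scoped Classical
namespace Stmt14Aux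
open Submodule ContinuousLinearMap
variable {H : Type*} [NormedAddCommGroup H] [InnerProductSpace ℂ H] [CompleteSpace H]

def sigma3 : Fin 3 × ℤ → ℤ := fun p => 3 * p.2 + (p.1.val : ℤ) - 1

lemma sigma3_inj : Function.Injective sigma3 := by
  rintro ⟨k, n⟩ ⟨l, m⟩ hp
  simp only [sigma3] at hp
  have hk := k.isLt
  have hl := l.isLt
  rw [Prod.mk.injEq]
  exact ⟨Fin.ext (by omega), by omega⟩

lemma sigma3_surj : Function.Surjective sigma3 := by
  intro m
  refine ⟨(⟨((m + 1) % 3).toNat, by omega⟩, (m + 1) / 3), ?_⟩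
  simp only [sigma3]
  omega

end Stmt14Aux

noncomputable section
namespace Stmt14Aux
open Submodule ContinuousLinearMap
variable {H : Type*} [NormedAddCommGroup H] [InnerProductSpace ℂ H] [CompleteSpace H]
local notation "⟪" a ", " b "⟫ₘ" => @inner ℂ _ _ a b

lemma huv_aux (e : HilbertBasis ℤ ℂ H) (k l : Fin 3) (n m : ℤ) :
    ⟪opA e (e (3 * n + (k.val : ℤ) - 1)), opC e (e (3 * m + (l.val : ℤ) - 1))⟫ₘ
      = @ite ℂ ((k, n) = ((l, m) : Fin 3 × ℤ)) (Classical.propDecidable _) (1 : ℂ) 0 := by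
  have einn := einner e
  have hA1 : ∀ n : ℤ, opA e (e (3 * n - 1)) = e (3 * n) - e (3 * n - 1) := by
    intro n
    rw [opA_m1 e (3 * n - 1) ⟨n, by ring⟩, show (3 * n - 1 + 1 : ℤ) = 3 * n from by ring]
  have hA2 : ∀ n : ℤ, opA e (e (3 * n)) = e (3 * n) := fun n => opA_0 e (3 * n) ⟨n, by ring⟩
  have hA3 : ∀ n : ℤ, opA e (e (3 * n + 1)) = e (3 * n + 1) - e (3 * n) := by
    intro n
    rw [opA_1 e (3 * n + 1) ⟨n, by ring⟩, show (3 * n + 1 + -1 : ℤ) = 3 * n from by ring]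
  have hC1 : ∀ n : ℤ, opC e (e (3 * n - 1)) = -e (3 * n - 1) := fun n =>
    opC_m1 e (3 * n - 1) ⟨n, by ring⟩
  have hC2 : ∀ n : ℤ, opC e (e (3 * n)) = e (3 * n - 1) + e (3 * n) + e (3 * n + 1) := by
    intro n
    rw [opC_0 e (3 * n) ⟨n, by ring⟩, show (3 * n + -1 : ℤ) = 3 * n - 1 from by ring]
  have hC3 : ∀ n : ℤ, opC e (e (3 * n + 1)) = e (3 * n + 1) := fun n =>
    opC_1 e (3 * n + 1) ⟨n, by ring⟩
  have n1 : ∀ a : ℤ, 3 * a + ((0 : ℕ) : ℤ) - 1 = 3 * a - 1 := by intro a; omega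
  have n2 : ∀ a : ℤ, 3 * a + ((1 : ℕ) : ℤ) - 1 = 3 * a := by intro a; omega
  have n3 : ∀ a : ℤ, 3 * a + ((2 : ℕ) : ℤ) - 1 = 3 * a + 1 := by intro a; omega
  fin_cases k <;> fin_cases l <;>
    simp only [Fin.isValue, Prod.mk.injEq, Fin.mk.injEq, n1, n2, n3, hA1, hA2, hA3,
      hC1, hC2, hC3, inner_sub_left, inner_sub_right, inner_add_left, inner_add_right,
      inner_neg_left, inner_neg_right, einn] <;>
    split_ifs
  all_goals try norm_num
  all_goals try (exfalso; omega)
  all_goals try (exfalso; simp_all)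


end Stmt14Aux

-- === main assembly ===
noncomputable section
namespace Stmt14Aux
open Submodule ContinuousLinearMap
variable {H : Type*} [NormedAddCommGroup H] [InnerProductSpace ℂ H] [CompleteSpace H]
local notation "⟪" a ", " b "⟫ₘ" => @inner ℂ _ _ a b

def eTil (e : HilbertBasis ℤ ℂ H) : HilbertBasis (Fin 3 × ℤ) ℂ H :=
  reBasis e sigma3 sigma3_inj sigma3_surj

lemma eTil_apply (e : HilbertBasis ℤ ℂ H) (p : Fin 3 × ℤ) :
    eTil e p = e (3 * p.2 + (p.1.val : ℤ) - 1) :=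
  reBasis_apply e sigma3 sigma3_inj sigma3_surj p

lemma master {ι : Type*} (e : HilbertBasis ι ℂ H) (U V : H ≃L[ℂ] H)
    (huv : ∀ i j, ⟪U (e i), V (e j)⟫ₘ = if i = j then (1 : ℂ) else 0)
    (z w : ι → H) (hz : ∀ i, z i = U (e i)) (hw : ∀ i, w i = V (e i)) :
    IsDualRieszBasisPair z w ∧
      ∀ F : H, HasSum (fun i : ι => (⟪z i, F⟫ₘ : ℂ) • w i) F := by
  have L1 : ∀ (g : H) (i : ι), ⟪U (e i), V g⟫ₘ = e.repr g i := by
    intro g i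
    have h1 : HasSum (fun j => e.repr g j • V (e j)) (V g) := by
      have := (e.hasSum_repr g).mapL (V : H →L[ℂ] H)
      simpa using this
    have h2 := h1.mapL (innerSL ℂ (U (e i)))
    have h3 : (fun j => (innerSL ℂ (U (e i))) (e.repr g j • V (e j)))
        = fun j => if j = i then e.repr g i else 0 := by
      funext j
      rw [innerSL_apply_apply, inner_smul_right, huv i j]
      by_cases hji : j = i
      · subst hji; simp
      · simp [hji, Ne.symm hji]
    rw [h3] at h2
    exact ((hasSum_ite_eq i (e.repr g i)).unique h2).symm
  have L2 : ∀ (f : H) (i : ι), ⟪V (e i), U f⟫ₘ = e.repr f i := by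
    intro f i
    have h1 : HasSum (fun j => e.repr f j • U (e j)) (U f) := by
      have := (e.hasSum_repr f).mapL (U : H →L[ℂ] H)
      simpa using this
    have h2 := h1.mapL (innerSL ℂ (V (e i)))
    have h3 : (fun j => (innerSL ℂ (V (e i))) (e.repr f j • U (e j)))
        = fun j => if j = i then e.repr f i else 0 := by
      funext j
      have hc : ⟪V (e i), U (e j)⟫ₘ = if j = i then (1 : ℂ) else 0 := by
        rw [← inner_conj_symm, huv j i]
        by_cases hji : j = i <;> simp [hji]
      rw [innerSL_apply_apply, inner_smul_right, hc]
      by_cases hji : j = i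
      · subst hji; simp
      · simp [hji]
    rw [h3] at h2
    exact ((hasSum_ite_eq i (e.repr f i)).unique h2).symm
  have hbi : ∀ i j, (⟪w j, z i⟫ₘ : ℂ) = if i = j then (1 : ℂ) else 0 := by
    intro i j
    rw [hw, hz, L2 (e i) j, e.repr_apply_apply, orthonormal_iff_ite.mp e.orthonormal j i]
    by_cases hij : i = j
    · simp [hij]
    · rw [if_neg (fun h => hij h.symm), if_neg hij]
  refine ⟨⟨⟨e, U, hz⟩, ⟨e, V, hw⟩, hbi, ?_⟩, ?_⟩
  · intro f
    have h1 : HasSum (fun i => e.repr (U.symm f) i • U (e i)) f := by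
      have := (e.hasSum_repr (U.symm f)).mapL (U : H →L[ℂ] H)
      simpa using this
    convert h1 using 2 with i
    rw [hw, hz]
    congr 1
    rw [← L2 (U.symm f) i]
    congr 1
    simp
  · intro F
    have h1 : HasSum (fun i => e.repr (V.symm F) i • V (e i)) F := by
      have := (e.hasSum_repr (V.symm F)).mapL (V : H →L[ℂ] H)
      simpa using this
    convert h1 using 2 with i
    rw [hw, hz]
    congr 1
    rw [← L1 (V.symm F) i]
    congr 1
    simp

end Stmt14Aux
end

open Stmt14Aux in
theorem stmt14 {H : Type*} [NormedAddCommGroup H] [InnerProductSpace ℂ H]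
    [CompleteSpace H] [TopologicalSpace.SeparableSpace H]
    (x y : ℤ → H) (hxy : IsDualRieszBasisPair x y)
    (z w : Fin 3 × ℤ → H)
    (hz : ∀ i : Fin 3 × ℤ, z i =
      ![x (3 * i.2) - x (3 * i.2 - 1), x (3 * i.2),
        x (3 * i.2 + 1) - x (3 * i.2)] i.1)
    (hw : ∀ i : Fin 3 × ℤ, w i =
      ![-y (3 * i.2 - 1), y (3 * i.2 - 1) + y (3 * i.2) + y (3 * i.2 + 1),
        y (3 * i.2 + 1)] i.1) :
    IsDualRieszBasisPair z w ∧
      ∀ F : H, HasSum (fun i : Fin 3 × ℤ => ⟪F, z i⟫ • w i) F := by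
  classical
  obtain ⟨⟨e, T, hxT⟩, -, hbi, -⟩ := hxy
  -- the adjoint equivalence
  have hcomp1 : (ContinuousLinearMap.adjoint (T : H →L[ℂ] H)).comp
      (ContinuousLinearMap.adjoint (T.symm : H →L[ℂ] H)) = ContinuousLinearMap.id ℂ H := by
    rw [← ContinuousLinearMap.adjoint_comp]
    have h : (T.symm : H →L[ℂ] H).comp (T : H →L[ℂ] H) = ContinuousLinearMap.id ℂ H := by
      ext v; simp
    rw [h, ContinuousLinearMap.adjoint_id]
  have hcomp2 : (ContinuousLinearMap.adjoint (T.symm : H →L[ℂ] H)).comp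
      (ContinuousLinearMap.adjoint (T : H →L[ℂ] H)) = ContinuousLinearMap.id ℂ H := by
    rw [← ContinuousLinearMap.adjoint_comp]
    have h : (T : H →L[ℂ] H).comp (T.symm : H →L[ℂ] H) = ContinuousLinearMap.id ℂ H := by
      ext v; simp
    rw [h, ContinuousLinearMap.adjoint_id]
  set Vx : H ≃L[ℂ] H := ContinuousLinearEquiv.equivOfInverse
      (ContinuousLinearMap.adjoint (T.symm : H →L[ℂ] H))
      (ContinuousLinearMap.adjoint (T : H →L[ℂ] H))
      (fun v => DFunLike.congr_fun hcomp1 v) (fun v => DFunLike.congr_fun hcomp2 v) with hVx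
  have hVxapp : ∀ v : H, Vx v = ContinuousLinearMap.adjoint (T.symm : H →L[ℂ] H) v :=
    fun v => rfl
  have hTVx : ∀ a b : H, (@inner ℂ _ _ (T a) (Vx b)) = @inner ℂ _ _ a b := by
    intro a b
    rw [hVxapp, ContinuousLinearMap.adjoint_inner_right]
    simp
  -- y j = Vx (e j)
  have hyV : ∀ j, y j = Vx (e j) := by
    intro j
    have key : ContinuousLinearMap.adjoint (T : H →L[ℂ] H) (y j) = e j := by
      apply e.repr.injective
      apply lp.ext
      funext i
      rw [e.repr_apply_apply, e.repr_apply_apply, ContinuousLinearMap.adjoint_inner_right]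
      have h1 : (@inner ℂ _ _ (x i) (y j)) = if i = j then (1 : ℂ) else 0 := by
        rw [← inner_conj_symm, hbi i j]
        by_cases hij : i = j <;> simp [hij]
      rw [show ((T : H →L[ℂ] H) (e i)) = T (e i) from rfl, ← hxT i, h1,
        orthonormal_iff_ite.mp e.orthonormal i j]
    have := DFunLike.congr_fun hcomp2 (y j)
    calc y j = ContinuousLinearMap.adjoint (T.symm : H →L[ℂ] H)
          (ContinuousLinearMap.adjoint (T : H →L[ℂ] H) (y j)) := by
            rw [show (ContinuousLinearMap.adjoint (T.symm : H →L[ℂ] H))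
              ((ContinuousLinearMap.adjoint (T : H →L[ℂ] H)) (y j))
              = ((ContinuousLinearMap.adjoint (T.symm : H →L[ℂ] H)).comp
                (ContinuousLinearMap.adjoint (T : H →L[ℂ] H))) (y j) from rfl, hcomp2]
            rfl
      _ = Vx (e j) := by rw [key]; rfl
  -- basis e-index inner products
  have einn := einner e
  -- the combination equivalences
  set U : H ≃L[ℂ] H := (eqvA e).trans T with hU
  set V : H ≃L[ℂ] H := (eqvC e).trans Vx with hV
  have hUapp : ∀ v, U v = T (opA e v) := fun v => rfl
  have hVapp : ∀ v, V v = Vx (opC e v) := fun v => rfl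
  -- value lemmas with clean indices
  have hA1 : ∀ n : ℤ, opA e (e (3 * n - 1)) = e (3 * n) - e (3 * n - 1) := by
    intro n
    rw [opA_m1 e (3 * n - 1) ⟨n, by ring⟩, show (3 * n - 1 + 1 : ℤ) = 3 * n from by ring]
  have hA2 : ∀ n : ℤ, opA e (e (3 * n)) = e (3 * n) := fun n =>
    opA_0 e (3 * n) ⟨n, by ring⟩
  have hA3 : ∀ n : ℤ, opA e (e (3 * n + 1)) = e (3 * n + 1) - e (3 * n) := by
    intro n
    rw [opA_1 e (3 * n + 1) ⟨n, by ring⟩, show (3 * n + 1 + -1 : ℤ) = 3 * n from by ring]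
  have hC1 : ∀ n : ℤ, opC e (e (3 * n - 1)) = -e (3 * n - 1) := fun n =>
    opC_m1 e (3 * n - 1) ⟨n, by ring⟩
  have hC2 : ∀ n : ℤ, opC e (e (3 * n)) = e (3 * n - 1) + e (3 * n) + e (3 * n + 1) := by
    intro n
    rw [opC_0 e (3 * n) ⟨n, by ring⟩, show (3 * n + -1 : ℤ) = 3 * n - 1 from by ring]
  have hC3 : ∀ n : ℤ, opC e (e (3 * n + 1)) = e (3 * n + 1) := fun n =>
    opC_1 e (3 * n + 1) ⟨n, by ring⟩
  -- index normalizations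
  have hEgen : ∀ (k : Fin 3) (n : ℤ), eTil e (k, n) = e (3 * n + (k.val : ℤ) - 1) :=
    fun k n => eTil_apply e (k, n)
  have n1 : ∀ a : ℤ, 3 * a + ((0 : ℕ) : ℤ) - 1 = 3 * a - 1 := by intro a; omega
  have n2 : ∀ a : ℤ, 3 * a + ((1 : ℕ) : ℤ) - 1 = 3 * a := by intro a; omega
  have n3 : ∀ a : ℤ, 3 * a + ((2 : ℕ) : ℤ) - 1 = 3 * a + 1 := by intro a; omega
  -- hypothesis of the master lemma
  have huv : ∀ i j : Fin 3 × ℤ,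
      (@inner ℂ _ _ (U (eTil e i)) (V (eTil e j)))
        = @ite ℂ (i = j) (Classical.propDecidable _) (1 : ℂ) 0 := by
    rintro ⟨k, n⟩ ⟨l, m⟩
    rw [hUapp, hVapp, hTVx, hEgen, hEgen]
    exact huv_aux e k l n m
  -- apply the master lemma
  have hz' : ∀ i : Fin 3 × ℤ, z i = U (eTil e i) := by
    rintro ⟨k, n⟩
    rw [hz ⟨k, n⟩, hUapp, hEgen]
    fin_cases k
    · show x (3 * n) - x (3 * n - 1) = T (opA e (e (3 * n + ((0 : ℕ) : ℤ) - 1)))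
      rw [n1, hA1, map_sub, ← hxT, ← hxT]
    · show x (3 * n) = T (opA e (e (3 * n + ((1 : ℕ) : ℤ) - 1)))
      rw [n2, hA2, ← hxT]
    · show x (3 * n + 1) - x (3 * n) = T (opA e (e (3 * n + ((2 : ℕ) : ℤ) - 1)))
      rw [n3, hA3, map_sub, ← hxT, ← hxT]
  have hw' : ∀ i : Fin 3 × ℤ, w i = V (eTil e i) := by
    rintro ⟨k, n⟩
    rw [hw ⟨k, n⟩, hVapp, hEgen]
    fin_cases k
    · show -y (3 * n - 1) = Vx (opC e (e (3 * n + ((0 : ℕ) : ℤ) - 1)))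
      rw [n1, hC1, map_neg, ← hyV]
    · show y (3 * n - 1) + y (3 * n) + y (3 * n + 1)
        = Vx (opC e (e (3 * n + ((1 : ℕ) : ℤ) - 1)))
      rw [n2, hC2, map_add, map_add, ← hyV, ← hyV, ← hyV]
    · show y (3 * n + 1) = Vx (opC e (e (3 * n + ((2 : ℕ) : ℤ) - 1)))
      rw [n3, hC3, ← hyV]
  exact master (eTil e) U V huv z w hz' hw'
end
end
end
end
end
end

section
/- Let H be a separable complex Hilbert space and let x, y : ℤ → H form a pair of dual Riesz bases for H. Then the family consisting of (n ↦ x_{4n} − x_{4n−1}), (n ↦ x_{4n}), (n ↦ x_{4n+1} − x_{4n}), and (n ↦ x_{4n} − 2x_{4n+1} + x_{4n+2}) is a Riesz basis for H whose dual Riesz basis is (n ↦ −y_{4n−1}), (n ↦ y_{4n−1} + y_{4n} + y_{4n+1} + y_{4n+2}), (n ↦ y_{4n+1} + 2y_{4n+2}), and (n ↦ y_{4n+2}) respectively; in particular, for every F ∈ H, F = ∑_{n∈ℤ} [ ⟨F, x_{4n} − x_{4n−1}⟩(−y_{4n−1}) + ⟨F, x_{4n}⟩(y_{4n−1} + y_{4n}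 + y_{4n+1} + y_{4n+2}) + ⟨F, x_{4n+1} − x_{4n}⟩(y_{4n+1} + 2y_{4n+2}) + ⟨F, x_{4n} − 2x_{4n+1} + x_{4n+2}⟩ y_{4n+2} ] with unconditional convergence over Fin 4 × ℤ. -/
noncomputable section
open scoped Classical

local notation "⟪" f ", " g "⟫" => @inner ℂ _ _ g f

namespace Stmt15Aux
open scoped ENNReal
open ContinuousLinearMap

variable {H : Type*} [NormedAddCommGroup H] [InnerProductSpace ℂ H] [CompleteSpace H]

/-- adjoint of the inverse, as a continuous linear equivalence -/
def adjE (S : H ≃L[ℂ] H) : H ≃L[ℂ] H where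
  toFun := adjoint (S.symm : H →L[ℂ] H)
  map_add' := map_add _
  map_smul' := map_smul _
  invFun := adjoint (S : H →L[ℂ] H)
  left_inv := fun v => by
    have hid : ((S.symm : H →L[ℂ] H).comp (S : H →L[ℂ] H)) = ContinuousLinearMap.id ℂ H := by
      ext u; simp
    show adjoint (S : H →L[ℂ] H) (adjoint (S.symm : H →L[ℂ] H) v) = v
    rw [← ContinuousLinearMap.comp_apply, ← adjoint_comp, hid, adjoint_id,
      ContinuousLinearMap.id_apply]
  right_inv := fun v => by
    have hid : ((S : H →L[ℂ] H).comp (S.symm : H →L[ℂ] H)) = ContinuousLinearMap.id ℂ H := by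
      ext u; simp
    show adjoint (S.symm : H →L[ℂ] H) (adjoint (S : H →L[ℂ] H) v) = v
    rw [← ContinuousLinearMap.comp_apply, ← adjoint_comp, hid, adjoint_id,
      ContinuousLinearMap.id_apply]
  continuous_toFun := (adjoint (S.symm : H →L[ℂ] H)).continuous
  continuous_invFun := (adjoint (S : H →L[ℂ] H)).continuous

lemma adjE_apply (S : H ≃L[ℂ] H) (v : H) :
    adjE S v = adjoint (S.symm : H →L[ℂ] H) v := rfl

lemma adjE_symm_coe (S : H ≃L[ℂ] H) :
    ((adjE S).symm : H →L[ℂ] H) = adjoint (S : H →L[ℂ] H) := by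
  ext v; rfl

variable {ι : Type*}

lemma dual_hasSum (b : HilbertBasis ι ℂ H) (S : H ≃L[ℂ] H) (f : H) :
    HasSum (fun i => (inner ℂ (adjoint (S.symm : H →L[ℂ] H) (b i)) f : ℂ) • S (b i)) f := by
  have h := (b.hasSum_repr (S.symm f)).mapL (S : H →L[ℂ] H)
  have h2 : (S : H →L[ℂ] H) (S.symm f) = f := by simp
  rw [h2] at h
  refine h.congr_fun fun i => ?_
  rw [map_smul, adjoint_inner_left, ← b.repr_apply_apply]
  rfl

lemma dual_biorth (b : HilbertBasis ι ℂ H) (S : H ≃L[ℂ] H) (i j : ι) :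
    (inner ℂ (adjoint (S.symm : H →L[ℂ] H) (b j)) (S (b i)) : ℂ) = if i = j then 1 else 0 := by
  rw [adjoint_inner_left]
  simp only [ContinuousLinearEquiv.coe_coe, ContinuousLinearEquiv.symm_apply_apply]
  rw [orthonormal_iff_ite.mp b.orthonormal]
  by_cases h : i = j <;> simp [h, eq_comm]

lemma dual_unique (b : HilbertBasis ι ℂ H) (S : H ≃L[ℂ] H) (w : ι → H)
    (hw : ∀ i j, (inner ℂ (w j) (S (b i)) : ℂ) = if i = j then 1 else 0) (j : ι) :
    w j = adjoint (S.symm : H →L[ℂ] H) (b j) := by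
  set d : ι → H := fun i => adjoint (S.symm : H →L[ℂ] H) (b i) with hd
  have hv : ∀ i, (inner ℂ (w j - d j) (S (b i)) : ℂ) = 0 := by
    intro i
    rw [inner_sub_left, hw i j, hd, dual_biorth b S i j, sub_self]
  have h1 := dual_hasSum b S (w j - d j)
  have h2 := h1.mapL (innerSL ℂ (w j - d j))
  have h3 : ∀ i, (innerSL ℂ (w j - d j))
      ((inner ℂ (adjoint (S.symm : H →L[ℂ] H) (b i)) (w j - d j) : ℂ) • S (b i)) = 0 := by
    intro i
    rw [map_smul]
    simp only [innerSL_apply_apply, hv i, smul_zero]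
  have h4 : HasSum (fun _ : ι => (0 : ℂ)) ((innerSL ℂ (w j - d j)) (w j - d j)) :=
    h2.congr_fun fun i => (h3 i).symm
  have h5 : (inner ℂ (w j - d j) (w j - d j) : ℂ) = 0 := by
    have h := h4.unique hasSum_zero
    rwa [innerSL_apply_apply] at h
  have h6 : w j - d j = 0 := inner_self_eq_zero.mp h5
  rw [sub_eq_zero] at h6
  exact h6

/-- the index bijection `(k, n) ↦ 4n + k - 1` -/
def phi : Fin 4 × ℤ ≃ ℤ where
  toFun p := 4 * p.2 + (p.1.val : ℤ) - 1
  invFun m := (⟨((m + 1) % 4).toNat, by omega⟩, (m + 1) / 4)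
  left_inv := by
    rintro ⟨k, n⟩
    have hk := k.isLt
    refine Prod.ext (Fin.ext ?_) ?_ <;> simp only <;> omega
  right_inv := by
    intro m
    simp only
    omega

abbrev L2 : Type := lp (fun _ : Fin 4 × ℤ => ℂ) 2

def Efun (k k' : Fin 4) (g : L2) : Fin 4 × ℤ → ℂ :=
  fun p => if p.1 = k then g (k', p.2) else 0

lemma injkn (k : Fin 4) : Function.Injective (fun n : ℤ => ((k, n) : Fin 4 × ℤ)) :=
  fun _ _ h => (Prod.ext_iff.mp h).2

lemma memE (k k' : Fin 4) (g : L2) : Memℓp (Efun k k' g) 2 := by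
  apply memℓp_gen
  have hg : Summable (fun p : Fin 4 × ℤ => ‖g p‖ ^ (2 : ℝ≥0∞).toReal) :=
    (lp.memℓp g).summable (by norm_num)
  have hsum : Summable (fun n : ℤ => ‖g (k', n)‖ ^ (2 : ℝ≥0∞).toReal) :=
    hg.comp_injective (injkn k')
  refine ((injkn k).summable_iff ?_).mp ?_
  · intro p hp
    have : p.1 ≠ k := by
      rintro h
      exact hp ⟨p.2, by rw [← h]⟩
    simp [Efun, this, Real.zero_rpow (by norm_num : (2 : ℝ≥0∞).toReal ≠ 0)]
  · refine hsum.congr fun n => ?_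
    simp [Efun]

lemma normE (k k' : Fin 4) (g : L2) : ‖(⟨Efun k k' g, memE k k' g⟩ : L2)‖ ≤ ‖g‖ := by
  refine lp.norm_le_of_tsum_le (by norm_num) (norm_nonneg g) ?_
  have h1 : ∑' p : Fin 4 × ℤ, ‖Efun k k' g p‖ ^ (2 : ℝ≥0∞).toReal
      = ∑' n : ℤ, ‖g (k', n)‖ ^ (2 : ℝ≥0∞).toReal := by
    refine ((injkn k).tsum_eq ?_).symm.trans ?_
    · intro p hp
      by_cases hne : p.1 = k
      · exact ⟨p.2, by rw [← hne]⟩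
      · exfalso
        apply hp
        simp [Efun, hne, Real.zero_rpow (by norm_num : (2 : ℝ≥0∞).toReal ≠ 0)]
    · refine tsum_congr fun n => ?_
      simp [Efun]
  have h2 : ∑' n : ℤ, ‖g (k', n)‖ ^ (2 : ℝ≥0∞).toReal ≤ ‖g‖ ^ (2 : ℝ≥0∞).toReal := by
    refine Summable.tsum_le_of_sum_le (((lp.memℓp g).summable (by norm_num)).comp_injective (injkn k'))
      fun s => ?_
    have := lp.sum_rpow_le_norm_rpow (by norm_num : 0 < (2 : ℝ≥0∞).toReal) g
      (s.image (fun n => ((k', n) : Fin 4 × ℤ)))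
    rwa [Finset.sum_image (fun a _ b _ h => (injkn k') h)] at this
  calc ∑' p : Fin 4 × ℤ, ‖((⟨Efun k k' g, memE k k' g⟩ : L2) : ∀ _, ℂ) p‖ ^ (2 : ℝ≥0∞).toReal
      = ∑' n : ℤ, ‖g (k', n)‖ ^ (2 : ℝ≥0∞).toReal := h1
    _ ≤ ‖g‖ ^ (2 : ℝ≥0∞).toReal := h2

def Elm (k k' : Fin 4) : L2 →ₗ[ℂ] L2 where
  toFun g := ⟨Efun k k' g, memE k k' g⟩
  map_add' g h := by
    apply lp.ext
    funext p
    have hc : ∀ (u v : L2), ((u + v : L2) : ∀ _, ℂ) = (u : ∀ _, ℂ) + (v : ∀ _, ℂ) := lp.coeFn_add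
    by_cases hp : p.1 = k <;> simp [Efun, hp, hc, Pi.add_apply]
  map_smul' c g := by
    apply lp.ext
    funext p
    by_cases hp : p.1 = k <;> simp [Efun, hp, lp.coeFn_smul, Pi.smul_apply]

def Ecl (k k' : Fin 4) : L2 →L[ℂ] L2 :=
  LinearMap.mkContinuous (Elm k k') 1 (fun g => by rw [one_mul]; exact normE k k' g)

lemma Ecl_apply (k k' : Fin 4) (g : L2) (p : Fin 4 × ℤ) :
    (Ecl k k' g : ∀ _, ℂ) p = if p.1 = k then g (k', p.2) else 0 := rfl

def Phi (m : Fin 4 → Fin 4 → ℂ) : L2 →L[ℂ] L2 :=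
  ∑ k : Fin 4, ∑ k' : Fin 4, m k k' • Ecl k k'

lemma Phi_apply (m : Fin 4 → Fin 4 → ℂ) (g : L2) (p : Fin 4 × ℤ) :
    (Phi m g : ∀ _, ℂ) p = ∑ k' : Fin 4, m p.1 k' * g (k', p.2) := by
  have h0 : Phi m g = ∑ k : Fin 4, ∑ k' : Fin 4, m k k' • Ecl k k' g := by
    simp [Phi, ContinuousLinearMap.sum_apply, ContinuousLinearMap.smul_apply]
  rw [h0]
  have h1 : ((∑ k : Fin 4, ∑ k' : Fin 4, m k k' • Ecl k k' g : L2) : ∀ _, ℂ) p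
      = ∑ k : Fin 4, ∑ k' : Fin 4, (m k k' • Ecl k k' g : L2) p := by
    rw [lp.coeFn_sum]
    rw [Finset.sum_apply]
    refine Finset.sum_congr rfl fun k _ => ?_
    rw [lp.coeFn_sum, Finset.sum_apply]
  rw [h1]
  have h2 : ∀ k kk : Fin 4, ((m k kk • Ecl k kk g : L2) : ∀ _, ℂ) p
      = m k kk * (if p.1 = k then g (kk, p.2) else 0) := by
    intro k kk
    rw [lp.coeFn_smul, Pi.smul_apply, Ecl_apply]
    simp
  simp only [h2, mul_ite, mul_zero]
  have h3 : ∀ k : Fin 4, (∑ kk : Fin 4, if p.1 = k then m k kk * g (kk, p.2) else 0)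
      = if p.1 = k then ∑ kk : Fin 4, m k kk * g (kk, p.2) else 0 := by
    intro k; split_ifs <;> simp
  rw [show (∑ k : Fin 4, ∑ kk : Fin 4, if p.1 = k then m k kk * g (kk, p.2) else 0)
      = ∑ k : Fin 4, if p.1 = k then ∑ kk : Fin 4, m k kk * g (kk, p.2) else 0 from
    Finset.sum_congr rfl fun k _ => h3 k]
  rw [Finset.sum_ite_eq]
  simp

lemma Phi_comp (m m' : Fin 4 → Fin 4 → ℂ) (g : L2) :
    Phi m (Phi m' g) = Phi (fun a c => ∑ b : Fin 4, m a b * m' b c) g := by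
  apply lp.ext
  funext p
  rw [Phi_apply, Phi_apply]
  have h : ∀ k' : Fin 4, ((Phi m' g : L2) : ∀ _, ℂ) (k', p.2)
      = ∑ k'' : Fin 4, m' k' k'' * g (k'', p.2) := fun k' => Phi_apply m' g (k', p.2)
  simp only [h, Finset.mul_sum, Finset.sum_mul]
  rw [Finset.sum_comm]
  refine Finset.sum_congr rfl fun a _ => Finset.sum_congr rfl fun b _ => by ring

lemma Phi_one (g : L2) : Phi (fun a b => if a = b then (1 : ℂ) else 0) g = g := by
  apply lp.ext
  funext p
  rw [Phi_apply]
  simp only [ite_mul, one_mul, zero_mul]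
  rw [Finset.sum_ite_eq]
  simp

def Am : Fin 4 → Fin 4 → ℂ := ![![-1,1,0,0],![0,1,0,0],![0,-1,1,0],![0,1,-2,1]]
def Bm : Fin 4 → Fin 4 → ℂ := ![![-1,0,0,0],![1,1,-1,1],![0,0,1,-2],![0,0,0,1]]
def Dm : Fin 4 → Fin 4 → ℂ := ![![-1,0,0,0],![1,1,1,1],![0,0,1,2],![0,0,0,1]]

lemma BA (a b : Fin 4) : Bm a b = Am b a := by
  fin_cases a <;> fin_cases b <;>
    simp [Am, Bm, Matrix.vecHead, Matrix.vecTail, Fin.ext_iff]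

lemma BD : (fun a c => ∑ b : Fin 4, Bm a b * Dm b c) = fun a b => if a = b then (1 : ℂ) else 0 := by
  funext a c
  fin_cases a <;> fin_cases c <;>
    simp [Bm, Dm, Fin.sum_univ_four, Matrix.vecHead, Matrix.vecTail, Fin.ext_iff] <;>
      norm_num <;> rw [if_neg (by decide)]

lemma DB : (fun a c => ∑ b : Fin 4, Dm a b * Bm b c) = fun a b => if a = b then (1 : ℂ) else 0 := by
  funext a c
  fin_cases a <;> fin_cases c <;>
    simp [Bm, Dm, Fin.sum_univ_four, Matrix.vecHead, Matrix.vecTail, Fin.ext_iff] <;>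
      norm_num <;> rw [if_neg (by decide)]

def lpE : L2 ≃L[ℂ] L2 where
  toFun := Phi Bm
  map_add' := map_add _
  map_smul' := map_smul _
  invFun := Phi Dm
  left_inv := fun g => by
    show Phi Dm (Phi Bm g) = g
    rw [Phi_comp, DB, Phi_one]
  right_inv := fun g => by
    show Phi Bm (Phi Dm g) = g
    rw [Phi_comp, BD, Phi_one]
  continuous_toFun := (Phi Bm).continuous
  continuous_invFun := (Phi Dm).continuous

lemma lpE_apply (g : L2) : lpE g = Phi Bm g := rfl

lemma single_apply' (i j : Fin 4 × ℤ) (c : ℂ) :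
    (lp.single 2 i c : ∀ _, ℂ) j = if j = i then c else 0 := by
  rw [lp.single_apply]
  by_cases h : j = i
  · subst h; simp
  · simp [h]

end Stmt15Aux

open Stmt15Aux

set_option maxHeartbeats 2000000 in
theorem stmt15 {H : Type*} [NormedAddCommGroup H] [InnerProductSpace ℂ H]
    [CompleteSpace H] [TopologicalSpace.SeparableSpace H]
    (x y : ℤ → H) (hxy : IsDualRieszBasisPair x y)
    (z w : Fin 4 × ℤ → H)
    (hz : ∀ i : Fin 4 × ℤ, z i =
      ![x (4 * i.2) - x (4 * i.2 - 1), x (4 * i.2),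
        x (4 * i.2 + 1) - x (4 * i.2),
        x (4 * i.2) - (2 : ℂ) • x (4 * i.2 + 1) + x (4 * i.2 + 2)] i.1)
    (hw : ∀ i : Fin 4 × ℤ, w i =
      ![-y (4 * i.2 - 1),
        y (4 * i.2 - 1) + y (4 * i.2) + y (4 * i.2 + 1) + y (4 * i.2 + 2),
        y (4 * i.2 + 1) + (2 : ℂ) • y (4 * i.2 + 2),
        y (4 * i.2 + 2)] i.1) :
    IsDualRieszBasisPair z w ∧
      ∀ F : H, HasSum (fun i : Fin 4 × ℤ => ⟪F, z i⟫ • w i) F := by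
  classical
  obtain ⟨⟨e, T, hx⟩, -, hb, -⟩ := hxy
  -- the reindexed Hilbert basis
  have horth : Orthonormal ℂ (fun p : Fin 4 × ℤ => e (phi p)) :=
    e.orthonormal.comp _ phi.injective
  have hspan : ⊤ ≤ (Submodule.span ℂ
      (Set.range (fun p : Fin 4 × ℤ => e (phi p)))).topologicalClosure := by
    have hr : Set.range (fun p : Fin 4 × ℤ => e (phi p)) = Set.range e :=
      Function.Surjective.range_comp phi.surjective e
    rw [hr, e.dense_span]
  let e' : HilbertBasis (Fin 4 × ℤ) ℂ H := HilbertBasis.mk horth hspan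
  have he' : ∀ p : Fin 4 × ℤ, e' p = e (phi p) := fun p =>
    congrFun (HilbertBasis.coe_mk horth hspan) p
  -- the operator on lp transported to H, composed with T
  let S : H ≃L[ℂ] H :=
    ((e'.repr.toContinuousLinearEquiv).trans
      (lpE.trans e'.repr.toContinuousLinearEquiv.symm)).trans T
  have hS : ∀ v : H, S v = T (e'.repr.symm (lpE (e'.repr v))) := fun v => rfl
  -- key computation: the lp operator implements the matrix `Am` on basis blocks
  have hMe : ∀ (k : Fin 4) (n : ℤ),
      Phi Bm (e'.repr (e' (k, n))) = e'.repr (∑ j : Fin 4, Am k j • e' (j, n)) := by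
    intro k n
    rw [e'.repr_self, map_sum]
    simp only [map_smul, HilbertBasis.repr_self]
    apply lp.ext
    funext p
    rw [Phi_apply]
    have hR : ((∑ j : Fin 4, Am k j • lp.single 2 ((j, n) : Fin 4 × ℤ) (1 : ℂ) : L2) : ∀ _, ℂ) p
        = ∑ j : Fin 4, Am k j * (if p = (j, n) then 1 else 0) := by
      rw [lp.coeFn_sum, Finset.sum_apply]
      refine Finset.sum_congr rfl fun j _ => ?_
      rw [lp.coeFn_smul, Pi.smul_apply, single_apply']
      simp
    rw [hR]
    have hsingle : ∀ k' : Fin 4,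
        ((lp.single 2 ((k, n) : Fin 4 × ℤ) (1 : ℂ) : L2) : ∀ _, ℂ) (k', p.2)
          = if ((k', p.2) : Fin 4 × ℤ) = (k, n) then 1 else 0 := fun k' =>
      single_apply' (k, n) (k', p.2) 1
    simp only [hsingle, Prod.mk.injEq, Prod.ext_iff]
    by_cases hn : p.2 = n
    · simp only [hn, and_true, mul_ite, mul_one, mul_zero]
      rw [Finset.sum_ite_eq' Finset.univ k fun k' => Bm p.1 k']
      rw [Finset.sum_ite_eq Finset.univ p.1 fun j => Am k j]
      simp [BA]
    · simp [hn]
  have hzS : ∀ i : Fin 4 × ℤ, z i = S (e' i) := by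
    rintro ⟨k, n⟩
    rw [hS, lpE_apply, hMe k n, LinearIsometryEquiv.symm_apply_apply, map_sum]
    simp only [map_smul, he', ← hx]
    have i0 : phi ((0 : Fin 4), n) = 4 * n - 1 := by
      show 4 * n + (((0 : Fin 4)).val : ℤ) - 1 = 4 * n - 1
      rw [show (((0 : Fin 4)).val : ℤ) = 0 from rfl]; ring
    have i1 : phi ((1 : Fin 4), n) = 4 * n := by
      show 4 * n + (((1 : Fin 4)).val : ℤ) - 1 = 4 * n
      rw [show (((1 : Fin 4)).val : ℤ) = 1 from rfl]; ring
    have i2 : phi ((2 : Fin 4), n) = 4 * n + 1 := by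
      show 4 * n + (((2 : Fin 4)).val : ℤ) - 1 = 4 * n + 1
      rw [show (((2 : Fin 4)).val : ℤ) = 2 from rfl]; ring
    have i3 : phi ((3 : Fin 4), n) = 4 * n + 2 := by
      show 4 * n + (((3 : Fin 4)).val : ℤ) - 1 = 4 * n + 2
      rw [show (((3 : Fin 4)).val : ℤ) = 3 from rfl]; ring
    rw [hz]
    fin_cases k <;>
      simp [Fin.sum_univ_four, Am, i0, i1, i2, i3, Matrix.vecHead, Matrix.vecTail] <;>
      module
  -- biorthogonality of z and w (direct computation)
  have hb' : ∀ a b : ℤ, (inner ℂ (y b) (x a) : ℂ) = if a = b then 1 else 0 := fun a b => by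
    rw [hb a b]; split_ifs <;> rfl
  have hbz : ∀ i j : Fin 4 × ℤ, (inner ℂ (w j) (z i) : ℂ) = if i = j then 1 else 0 := by
    rintro ⟨k, m⟩ ⟨k', n⟩
    rw [hz, hw]
    simp only [Prod.mk.injEq, Prod.ext_iff]
    fin_cases k <;> fin_cases k' <;>
      simp [inner_add_left, inner_sub_left, inner_neg_left, inner_smul_left,
        inner_add_right, inner_sub_right, inner_neg_right, inner_smul_right, hb',
        Fin.ext_iff, Matrix.vecHead, Matrix.vecTail, map_ofNat] <;>
      (try split_ifs) <;> (try omega) <;> (try norm_num) <;> (try omega)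
  -- w is forced to be the canonical dual of z
  have hbzC : ∀ i j : Fin 4 × ℤ,
      (inner ℂ (w j) (z i) : ℂ) = @ite ℂ (i = j) (Classical.propDecidable _) 1 0 := by
    intro i j
    rw [hbz i j]
    split_ifs <;> rfl
  have hwbio : ∀ i j : Fin 4 × ℤ,
      (inner ℂ (w j) (S (e' i)) : ℂ) = @ite ℂ (i = j) (Classical.propDecidable _) 1 0 := by
    intro i j
    rw [← hzS]
    exact hbzC i j
  have hwd : ∀ j : Fin 4 × ℤ,
      w j = ContinuousLinearMap.adjoint (S.symm : H →L[ℂ] H) (e' j) :=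
    dual_unique e' S w hwbio
  refine ⟨⟨⟨e', S, hzS⟩, ?_, ?_, ?_⟩, ?_⟩
  · exact ⟨e', adjE S, fun i => by rw [hwd i]; rfl⟩
  · exact fun i j => hbzC i j
  · intro f
    refine (dual_hasSum e' S f).congr_fun fun i => ?_
    rw [← hwd i, ← hzS i]
  · intro F
    have h := dual_hasSum e' (adjE S) F
    refine h.congr_fun fun i => ?_
    have h1 : ContinuousLinearMap.adjoint ((adjE S).symm : H →L[ℂ] H) (e' i) = S (e' i) := by
      rw [adjE_symm_coe, ContinuousLinearMap.adjoint_adjoint]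
      rfl
    rw [h1, ← hzS i, adjE_apply, ← hwd i]
end
end

section
/- Let H be a separable complex Hilbert space and let x, y : ℤ → H form a pair of dual Riesz bases for H. Then the family consisting of (n ↦ x_{3n}), (n ↦ (1/2)(x_{3n−1} + x_{3n+1})), and (n ↦ x_{3n+1} − x_{3n−1}) is a Riesz basis for H whose dual Riesz basis is (n ↦ y_{3n}), (n ↦ y_{3n−1} + y_{3n+1}), and (n ↦ (1/2)(y_{3n+1} − y_{3n−1})) respectively; in particular, for every F ∈ H, F = ∑_{n∈ℤ} [ ⟨F, x_{3n}⟩ y_{3n} + ⟨F, (1/2)(x_{3n−1} + x_{3n+1})⟩(y_{3n−1} + y_{3n+1}) + ⟨F, x_{3n+1} − x_{3n−1}⟩·(1/2)(y_{3n+1} − y_{3n−1}) ] with unconditional convergence over Fin 3 × ℤ. -/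
noncomputable section
open scoped Classical

local notation "⟪" f ", " g "⟫" => @inner ℂ _ _ g f

/- ### Auxiliary material -/

open Submodule

def finco : Fin 3 → ℤ
  | 0 => 0
  | 1 => -1
  | 2 => 1

def sig3 : Fin 3 × ℤ ≃ ℤ where
  toFun i := 3 * i.2 + finco i.1
  invFun j := if j % 3 = 0 then (0, j / 3) else if j % 3 = 2 then (1, (j + 1) / 3) else (2, (j - 1) / 3)
  left_inv := by
    rintro ⟨k, n⟩
    fin_cases k <;> dsimp only [finco]
    · rw [if_pos (by omega)]
      exact Prod.ext rfl (by dsimp; omega)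
    · rw [if_neg (by omega), if_pos (by omega)]
      exact Prod.ext rfl (by dsimp; omega)
    · rw [if_neg (by omega), if_neg (by omega)]
      exact Prod.ext rfl (by dsimp; omega)
  right_inv := by
    intro j
    dsimp only
    split_ifs with h1 h2 <;> simp only [finco] <;> omega

lemma sig3_zero (n : ℤ) : sig3 (0, n) = 3 * n := by simp [sig3, finco]
lemma sig3_one (n : ℤ) : sig3 (1, n) = 3 * n - 1 := by simp [sig3, finco]; ring
lemma sig3_two (n : ℤ) : sig3 (2, n) = 3 * n + 1 := by simp [sig3, finco]

lemma fin3_cases : ∀ k : Fin 3, k = 0 ∨ k = 1 ∨ k = 2 := by decide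

section HilbertAux

variable {H : Type*} [NormedAddCommGroup H] [InnerProductSpace ℂ H] [CompleteSpace H]

lemma mem_orthogonal_span_range {ι : Type*} {v : ι → H} {u : H}
    (h : ∀ i, (inner ℂ (v i) u : ℂ) = 0) : u ∈ (span ℂ (Set.range v))ᗮ := by
  rw [Submodule.mem_orthogonal]
  intro a ha
  induction ha using Submodule.span_induction with
  | mem a ha => obtain ⟨i, rfl⟩ := ha; exact h i
  | zero => simp
  | add a b _ _ ha hb => simp [inner_add_left, ha, hb]
  | smul c a _ ha => simp [inner_smul_left, ha]

lemma eq_of_inner_eq_denseSpan {ι : Type*} {v : ι → H}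
    (hd : (span ℂ (Set.range v)).topologicalClosure = ⊤) {a b : H}
    (h : ∀ i, (inner ℂ (v i) a : ℂ) = inner ℂ (v i) b) : a = b := by
  have hdo : (span ℂ (Set.range v))ᗮᗮ = ⊤ := by
    rw [Submodule.orthogonal_orthogonal_eq_closure, hd]
  have hmem : a - b ∈ (span ℂ (Set.range v))ᗮ :=
    mem_orthogonal_span_range (fun i => by simp [inner_sub_right, h i])
  have htop : a - b ∈ (span ℂ (Set.range v))ᗮᗮ := hdo ▸ Submodule.mem_top
  have := (Submodule.mem_orthogonal _ _).mp htop (a - b) hmem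
  rwa [inner_self_eq_zero, sub_eq_zero] at this

lemma IsRieszBasis.denseSpan {ι : Type*} {v : ι → H} (hv : IsRieszBasis v) :
    (span ℂ (Set.range v)).topologicalClosure = ⊤ := by
  obtain ⟨e, T, hT⟩ := hv
  have hr : Set.range v = (T : H →ₗ[ℂ] H) '' Set.range e := by
    ext u
    simp only [Set.mem_range, Set.mem_image]
    constructor
    · rintro ⟨i, rfl⟩; exact ⟨e i, ⟨i, rfl⟩, (hT i).symm⟩
    · rintro ⟨_, ⟨i, rfl⟩, rfl⟩; exact ⟨i, hT i⟩
  rw [← Submodule.dense_iff_topologicalClosure_eq_top] at *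
  rw [hr, ← Submodule.map_span]
  have h1 : Dense ((span ℂ (Set.range e) : Submodule ℂ H) : Set H) :=
    Submodule.dense_iff_topologicalClosure_eq_top.mpr e.dense_span
  have h2 : Dense (T '' ((span ℂ (Set.range e) : Submodule ℂ H) : Set H)) :=
    T.surjective.denseRange.dense_image T.continuous h1
  simpa [Submodule.map_coe] using h2

lemma expansion_of_biorthogonal {ι : Type*} {v u : ι → H}
    (hv : IsRieszBasis v) (hu : IsRieszBasis u)
    (hbi : ∀ i j, (inner ℂ (u j) (v i) : ℂ) = if i = j then 1 else 0) (f : H) :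
    HasSum (fun i => (inner ℂ (u i) f : ℂ) • v i) f := by
  obtain ⟨ev, Tv, hTv⟩ := id hv
  obtain ⟨eu, Tu, hTu⟩ := id hu
  set a : lp (fun _ : ι => ℂ) 2 :=
    eu.repr ((ContinuousLinearMap.adjoint (Tu : H →L[ℂ] H)) f) with ha
  have haa : ∀ i, a i = inner ℂ (u i) f := by
    intro i
    rw [ha, eu.repr_apply_apply, ContinuousLinearMap.adjoint_inner_right, hTu i]
    rfl
  have hs0 : HasSum (fun i => a i • ev i) (ev.repr.symm a) := ev.hasSum_repr_symm a
  have hs1 : HasSum (fun i => (inner ℂ (u i) f : ℂ) • v i) (Tv (ev.repr.symm a)) := by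
    have h := hs0.mapL (Tv : H →L[ℂ] H)
    have heq : (fun i => (Tv : H →L[ℂ] H) (a i • ev i)) = fun i => (inner ℂ (u i) f : ℂ) • v i := by
      funext i
      rw [map_smul, haa i]
      exact congrArg _ (hTv i).symm
    rwa [heq] at h
  have key : ∀ j, (inner ℂ (u j) (Tv (ev.repr.symm a)) : ℂ) = inner ℂ (u j) f := by
    intro j
    have h2 := hs1.mapL (innerSL ℂ (u j))
    have h3 : (fun i => (innerSL ℂ (u j)) ((inner ℂ (u i) f : ℂ) • v i)) =
        fun i => if i = j then (inner ℂ (u j) f : ℂ) else 0 := by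
      funext i
      simp only [coe_innerSL_apply, innerSL_apply_apply, inner_smul_right, hbi]
      split_ifs with h
      · subst h; ring
      · ring
    rw [h3] at h2
    exact h2.unique (hasSum_ite_eq j _)
  have := eq_of_inner_eq_denseSpan (IsRieszBasis.denseSpan hu) key
  rwa [this] at hs1

lemma orth_closure (K : Submodule ℂ H) : (K.topologicalClosure)ᗮ = Kᗮ := by
  conv_lhs => rw [← K.orthogonal_orthogonal_eq_closure]
  exact (Kᗮ.orthogonal_orthogonal_eq_closure).trans
    (K.isClosed_orthogonal.submodule_topologicalClosure_eq)

lemma proj_clm (e : HilbertBasis (Fin 3 × ℤ) ℂ H) (k₀ : Fin 3) :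
    ∃ P : H →L[ℂ] H, (∀ n, P (e (k₀, n)) = e (k₀, n)) ∧
      (∀ k n, k ≠ k₀ → P (e (k, n)) = 0) := by
  set K : Submodule ℂ H := (span ℂ (Set.range (fun n : ℤ => e (k₀, n)))).topologicalClosure with hK
  haveI : CompleteSpace K :=
    (span ℂ (Set.range (fun n : ℤ => e (k₀, n)))).isClosed_topologicalClosure.completeSpace_coe
  refine ⟨K.subtypeL.comp (orthogonalProjection K), fun n => ?_, fun k n hk => ?_⟩
  · have hmem : e (k₀, n) ∈ K :=
      (span ℂ (Set.range (fun n : ℤ => e (k₀, n)))).le_topologicalClosure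
        (subset_span ⟨n, rfl⟩)
    simpa using Submodule.starProjection_eq_self_iff.mpr hmem
  · have hmem : e (k, n) ∈ Kᗮ := by
      rw [hK, orth_closure]
      refine mem_orthogonal_span_range fun m => ?_
      have := e.orthonormal
      rw [orthonormal_iff_ite] at this
      rw [this]
      rw [if_neg (by simp [Prod.ext_iff]; tauto)]
    simpa using (Submodule.starProjection_apply_eq_zero_iff K).mpr hmem

lemma swap_clm (e : HilbertBasis (Fin 3 × ℤ) ℂ H) :
    ∃ V : H →L[ℂ] H, (∀ n, V (e (0, n)) = e (0, n)) ∧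
      (∀ n, V (e (1, n)) = e (2, n)) ∧ (∀ n, V (e (2, n)) = e (1, n)) := by
  set π : Fin 3 × ℤ ≃ Fin 3 × ℤ := Equiv.prodCongr (Equiv.swap 1 2) (Equiv.refl ℤ) with hπ
  have hon : Orthonormal ℂ (⇑e ∘ ⇑π) := e.orthonormal.comp π π.injective
  have hsp : ⊤ ≤ (span ℂ (Set.range (⇑e ∘ ⇑π))).topologicalClosure := by
    rw [π.surjective.range_comp, e.dense_span]
  set b : HilbertBasis (Fin 3 × ℤ) ℂ H := HilbertBasis.mk hon hsp with hb
  have hbi : ∀ i, b i = e (π i) := fun i => congrFun (HilbertBasis.coe_mk hon hsp) i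
  set V : H ≃ₗᵢ[ℂ] H := e.repr.trans b.repr.symm with hV
  have hVi : ∀ i, V (e i) = e (π i) := by
    intro i
    rw [hV, LinearIsometryEquiv.trans_apply, e.repr_self, b.repr_symm_single, hbi]
  refine ⟨V.toLinearIsometry.toContinuousLinearMap, fun n => ?_, fun n => ?_, fun n => ?_⟩ <;>
    exact hVi _

lemma blockCLE (e : HilbertBasis (Fin 3 × ℤ) ℂ H) (p q r s p' q' r' s' : ℂ)
    (h1 : p' * p + r' * q = 1) (h2 : q' * p + s' * q = 0)
    (h3 : p' * r + r' * s = 0) (h4 : q' * r + s' * s = 1)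
    (h5 : p * p' + r * q' = 1) (h6 : q * p' + s * q' = 0)
    (h7 : p * r' + r * s' = 0) (h8 : q * r' + s * s' = 1) :
    ∃ S : H ≃L[ℂ] H,
      (∀ n, S (e (0, n)) = e (0, n)) ∧
      (∀ n, S (e (1, n)) = p • e (1, n) + q • e (2, n)) ∧
      (∀ n, S (e (2, n)) = r • e (1, n) + s • e (2, n)) := by
  obtain ⟨P0, hP0a, hP0b⟩ := proj_clm e 0
  obtain ⟨P2, hP2a, hP2b⟩ := proj_clm e 2
  obtain ⟨V, hV0, hV1, hV2⟩ := swap_clm e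
  set L : ℂ → ℂ → ℂ → ℂ → (H →L[ℂ] H) := fun p q r s =>
    p • (1 : H →L[ℂ] H) + q • V + (s - p) • P2 + (r - q) • (V.comp P2) + (1 - p - q) • P0
    with hLdef
  have hL0 : ∀ (p q r s : ℂ) n, L p q r s (e (0, n)) = e (0, n) := by
    intro p q r s n
    simp only [hLdef, ContinuousLinearMap.add_apply, ContinuousLinearMap.smul_apply,
      ContinuousLinearMap.one_apply, ContinuousLinearMap.comp_apply,
      hV0, hP0a, hP2b 0 n (by decide), map_zero, smul_zero]
    module
  have hL1 : ∀ (p q r s : ℂ) n, L p q r s (e (1, n)) = p • e (1, n) + q • e (2, n) := by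
    intro p q r s n
    simp only [hLdef, ContinuousLinearMap.add_apply, ContinuousLinearMap.smul_apply,
      ContinuousLinearMap.one_apply, ContinuousLinearMap.comp_apply,
      hV1, hP0b 1 n (by decide), hP2b 1 n (by decide), map_zero, smul_zero]
    module
  have hL2 : ∀ (p q r s : ℂ) n, L p q r s (e (2, n)) = r • e (1, n) + s • e (2, n) := by
    intro p q r s n
    simp only [hLdef, ContinuousLinearMap.add_apply, ContinuousLinearMap.smul_apply,
      ContinuousLinearMap.one_apply, ContinuousLinearMap.comp_apply,
      hV2, hP0b 2 n (by decide), hP2a, map_zero, smul_zero]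
    module
  have hdense : Dense ((span ℂ (Set.range ⇑e) : Submodule ℂ H) : Set H) :=
    Submodule.dense_iff_topologicalClosure_eq_top.mpr e.dense_span
  have hcomp1 : (L p q r s).comp (L p' q' r' s') = ContinuousLinearMap.id ℂ H := by
    refine ContinuousLinearMap.ext_on hdense ?_
    rintro _ ⟨⟨k, n⟩, rfl⟩
    rcases fin3_cases k with rfl | rfl | rfl <;>
      simp only [ContinuousLinearMap.comp_apply, ContinuousLinearMap.id_apply]
    · rw [hL0, hL0]
    · rw [hL1, map_add, map_smul, map_smul, hL1, hL2]
      match_scalars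
      · linear_combination h5
      · linear_combination h6
    · rw [hL2, map_add, map_smul, map_smul, hL1, hL2]
      match_scalars
      · linear_combination h7
      · linear_combination h8
  have hcomp2 : (L p' q' r' s').comp (L p q r s) = ContinuousLinearMap.id ℂ H := by
    refine ContinuousLinearMap.ext_on hdense ?_
    rintro _ ⟨⟨k, n⟩, rfl⟩
    rcases fin3_cases k with rfl | rfl | rfl <;>
      simp only [ContinuousLinearMap.comp_apply, ContinuousLinearMap.id_apply]
    · rw [hL0, hL0]
    · rw [hL1, map_add, map_smul, map_smul, hL1, hL2]
      match_scalars
      · linear_combination h1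
      · linear_combination h2
    · rw [hL2, map_add, map_smul, map_smul, hL1, hL2]
      match_scalars
      · linear_combination h3
      · linear_combination h4
  refine ⟨ContinuousLinearEquiv.equivOfInverse (L p q r s) (L p' q' r' s')
      (fun v => ?_) (fun v => ?_), fun n => ?_, fun n => ?_, fun n => ?_⟩
  · exact DFunLike.congr_fun hcomp2 v
  · exact DFunLike.congr_fun hcomp1 v
  · exact hL0 p q r s n
  · exact hL1 p q r s n
  · exact hL2 p q r s n

/-- Reindex a Hilbert basis on `ℤ` by `sig3`. -/
lemma reindex_basis (e : HilbertBasis ℤ ℂ H) :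
    ∃ e' : HilbertBasis (Fin 3 × ℤ) ℂ H, ∀ i, e' i = e (sig3 i) := by
  have hon : Orthonormal ℂ (⇑e ∘ ⇑sig3) := e.orthonormal.comp sig3 sig3.injective
  have hsp : ⊤ ≤ (span ℂ (Set.range (⇑e ∘ ⇑sig3))).topologicalClosure := by
    rw [sig3.surjective.range_comp, e.dense_span]
  exact ⟨HilbertBasis.mk hon hsp, fun i => congrFun (HilbertBasis.coe_mk hon hsp) i⟩

end HilbertAux

theorem stmt17 {H : Type*} [NormedAddCommGroup H] [InnerProductSpace ℂ H]
    [CompleteSpace H] [TopologicalSpace.SeparableSpace H]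
    (x y : ℤ → H) (hxy : IsDualRieszBasisPair x y)
    (z w : Fin 3 × ℤ → H)
    (hz : ∀ i : Fin 3 × ℤ, z i =
      ![x (3 * i.2),
        ((1 : ℂ) / 2) • (x (3 * i.2 - 1) + x (3 * i.2 + 1)),
        x (3 * i.2 + 1) - x (3 * i.2 - 1)] i.1)
    (hw : ∀ i : Fin 3 × ℤ, w i =
      ![y (3 * i.2),
        y (3 * i.2 - 1) + y (3 * i.2 + 1),
        ((1 : ℂ) / 2) • (y (3 * i.2 + 1) - y (3 * i.2 - 1))] i.1) :
    IsDualRieszBasisPair z w ∧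
      ∀ F : H, HasSum (fun i : Fin 3 × ℤ => ⟪F, z i⟫ • w i) F := by
  obtain ⟨⟨ex, Tx, hTx⟩, ⟨ey, Ty, hTy⟩, hbi, hexp⟩ := hxy
  obtain ⟨ex', hex'⟩ := reindex_basis ex
  obtain ⟨ey', hey'⟩ := reindex_basis ey
  obtain ⟨Sz, hSz0, hSz1, hSz2⟩ := blockCLE ex' (1/2) (1/2) (-1) 1 1 (-1/2) 1 (1/2)
    (by norm_num) (by norm_num) (by norm_num) (by norm_num)
    (by norm_num) (by norm_num) (by norm_num) (by norm_num)
  obtain ⟨Sw, hSw0, hSw1, hSw2⟩ := blockCLE ey' 1 1 (-1/2) (1/2) (1/2) (-1) (1/2) 1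
    (by norm_num) (by norm_num) (by norm_num) (by norm_num)
    (by norm_num) (by norm_num) (by norm_num) (by norm_num)
  -- `z` is a Riesz basis
  have hz' : ∀ i, z i = (Sz.trans Tx) (ex' i) := by
    rintro ⟨k, n⟩
    rcases fin3_cases k with rfl | rfl | rfl <;>
      rw [hz] <;>
      simp only [Matrix.cons_val_zero, Matrix.cons_val_one, Matrix.head_cons,
        Matrix.cons_val_two, Matrix.tail_cons, ContinuousLinearEquiv.trans_apply]
    · rw [hSz0, hex', sig3_zero, hTx]
    · rw [hSz1, hex', hex', sig3_one, sig3_two, map_add, map_smul, map_smul,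
        ← hTx, ← hTx, smul_add]
    · rw [hSz2, hex', hex', sig3_one, sig3_two, map_add, map_smul, map_smul,
        ← hTx, ← hTx]
      module
  have hw' : ∀ i, w i = (Sw.trans Ty) (ey' i) := by
    rintro ⟨k, n⟩
    rcases fin3_cases k with rfl | rfl | rfl <;>
      rw [hw] <;>
      simp only [Matrix.cons_val_zero, Matrix.cons_val_one, Matrix.head_cons,
        Matrix.cons_val_two, Matrix.tail_cons, ContinuousLinearEquiv.trans_apply]
    · rw [hSw0, hey', sig3_zero, hTy]
    · rw [hSw1, hey', hey', sig3_one, sig3_two, map_add, map_smul, map_smul,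
        ← hTy, ← hTy]
      module
    · rw [hSw2, hey', hey', sig3_one, sig3_two, map_add, map_smul, map_smul,
        ← hTy, ← hTy]
      module
  have hRz : IsRieszBasis z := ⟨ex', Sz.trans Tx, hz'⟩
  have hRw : IsRieszBasis w := ⟨ey', Sw.trans Ty, hw'⟩
  -- biorthogonality
  have hb : ∀ a b : ℤ, (inner ℂ (y b) (x a) : ℂ) =
      @ite ℂ (a = b) (Classical.propDecidable _) 1 0 := hbi
  have hbz : ∀ i j : Fin 3 × ℤ, (inner ℂ (w j) (z i) : ℂ) =
      @ite ℂ (i = j) (Classical.propDecidable _) 1 0 := by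
    rintro ⟨k, n⟩ ⟨l, m⟩
    rw [hz, hw]
    rcases fin3_cases k with rfl | rfl | rfl <;> rcases fin3_cases l with rfl | rfl | rfl <;>
      simp only [Matrix.cons_val_zero, Matrix.cons_val_one, Matrix.head_cons,
        Matrix.cons_val_two, Matrix.tail_cons, inner_add_left, inner_add_right,
        inner_sub_left, inner_sub_right, inner_smul_left, inner_smul_right, hb,
        Prod.mk.injEq, map_div₀, map_one, map_ofNat, one_ne_zero, zero_ne_one,
        eq_self_iff_true, true_and, and_true, false_and, and_false, if_true, if_false,
        Fin.isValue] <;>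
      split_ifs <;> first | (exfalso; omega) | norm_num
  have hbz2 : ∀ i j : Fin 3 × ℤ, (inner ℂ (z j) (w i) : ℂ) =
      @ite ℂ (i = j) (Classical.propDecidable _) 1 0 := by
    intro i j
    rw [← inner_conj_symm, hbz j i]
    by_cases h : i = j
    · simp [h]
    · rw [if_neg (fun hji => h hji.symm), if_neg h, map_zero]
  have hexp1 : ∀ f : H, HasSum (fun i => (inner ℂ (w i) f : ℂ) • z i) f :=
    fun f => expansion_of_biorthogonal hRz hRw hbz f
  have hexp2 : ∀ f : H, HasSum (fun i => (inner ℂ (z i) f : ℂ) • w i) f :=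
    fun f => expansion_of_biorthogonal hRw hRz hbz2 f
  exact ⟨⟨hRz, hRw, hbz, hexp1⟩, hexp2⟩
end
end

section
/- Let H be a separable complex Hilbert space and let u, v : ℤ × ℤ → H form a pair of dual Riesz bases for H. For k ∈ Fin 2, k' ∈ Fin 3 and n, m ∈ ℤ define z_{(k,k'),(n,m)} = ∑_{j=0}^{k} ∑_{j'=0}^{k'} (−1)^{(k−j)+(k'−j')} C(k,j) C(k',j') u_{(2n+j, 3m+j')} and w_{(k,k'),(n,m)} = ∑_{j=k}^{1} ∑_{j'=k'}^{2} C(j,k) C(j',k') v_{(2n+j, 3m+j')}, where C(·,·) is the binomial coefficient. Then z : (Fin 2 × Fin 3) × (ℤ × ℤ) → H is a Riesz basis for H with dual Riesz basis w; in particular, for every f ∈ H the family (((k,k'),(n,m)) ↦ ⟨f, z_{(k,k'),(n,m)}⟩ w_{(k,k'),(n,m)}) has sum f (unconditional convergence in H). -/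
noncomputable section
open scoped Classical

local notation "⟪" f ", " g "⟫" => @inner ℂ _ _ g f

set_option linter.unusedSectionVars false
set_option linter.unreachableTactic false
set_option linter.unusedTactic false
set_option linter.unnecessarySeqFocus false

section Aux

variable {H : Type*} [NormedAddCommGroup H] [InnerProductSpace ℂ H] [CompleteSpace H]
variable {ι ι' : Type*}

/-- Reindex a Hilbert basis along an equivalence. -/
def reindexB (e : HilbertBasis ι ℂ H) (τ : ι' ≃ ι) : HilbertBasis ι' ℂ H :=
  HilbertBasis.mk (e.orthonormal.comp τ τ.injective)
    (by
      have hr : Set.range (⇑e ∘ ⇑τ) = Set.range ⇑e := τ.surjective.range_comp ⇑e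
      rw [hr, e.dense_span])

@[simp] lemma reindexB_apply (e : HilbertBasis ι ℂ H) (τ : ι' ≃ ι) (i : ι') :
    reindexB e τ i = e (τ i) := by
  have : ⇑(reindexB e τ) = ⇑e ∘ ⇑τ := HilbertBasis.coe_mk _ _
  rw [this]; rfl

/-- The unitary sending one Hilbert basis to another. -/
def basisEquiv (e f : HilbertBasis ι ℂ H) : H ≃L[ℂ] H :=
  (e.repr.trans f.repr.symm).toContinuousLinearEquiv

@[simp] lemma basisEquiv_apply (e f : HilbertBasis ι ℂ H) (i : ι) :
    basisEquiv e f (e i) = f i := by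
  show (e.repr.trans f.repr.symm) (e i) = f i
  rw [LinearIsometryEquiv.trans_apply, HilbertBasis.repr_self, HilbertBasis.repr_symm_single]

/-- Orthogonal projection onto the closed span of part of a Hilbert basis. -/
def projSpan (e : HilbertBasis ι ℂ H) (A : Set ι) : H →L[ℂ] H :=
  haveI : CompleteSpace ((Submodule.span ℂ (⇑e '' A)).topologicalClosure) :=
    (Submodule.isClosed_topologicalClosure _).completeSpace_coe
  ((Submodule.span ℂ (⇑e '' A)).topologicalClosure).subtypeL.comp
    (Submodule.orthogonalProjectionOnto ((Submodule.span ℂ (⇑e '' A)).topologicalClosure))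

lemma projSpan_apply_mem (e : HilbertBasis ι ℂ H) (A : Set ι) {p : ι} (hp : p ∈ A) :
    projSpan e A (e p) = e p := by
  haveI : CompleteSpace ((Submodule.span ℂ (⇑e '' A)).topologicalClosure) :=
    (Submodule.isClosed_topologicalClosure _).completeSpace_coe
  have hm : e p ∈ (Submodule.span ℂ (⇑e '' A)).topologicalClosure :=
    (Submodule.le_topologicalClosure _) (Submodule.subset_span ⟨p, hp, rfl⟩)
  exact Submodule.starProjection_eq_self_iff.mpr hm

lemma projSpan_apply_not_mem (e : HilbertBasis ι ℂ H) (A : Set ι) {p : ι} (hp : p ∉ A) :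
    projSpan e A (e p) = 0 := by
  haveI : CompleteSpace ((Submodule.span ℂ (⇑e '' A)).topologicalClosure) :=
    (Submodule.isClosed_topologicalClosure _).completeSpace_coe
  have h1 : e p ∈ (Submodule.span ℂ (⇑e '' A))ᗮ := by
    rw [Submodule.mem_orthogonal]
    intro x hx
    refine Submodule.span_induction (p := fun x _ => (inner ℂ x (e p) : ℂ) = 0) ?_ ?_ ?_ ?_ hx
    · rintro y ⟨q, hq, rfl⟩
      have : q ≠ p := fun h => hp (h ▸ hq)
      simpa [this] using e.orthonormal.2 this
    · simp
    · intro a b _ _ ha hb; simp [inner_add_left, ha, hb]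
    · intro r a _ ha; simp [inner_smul_left, ha]
  have h2 : e p ∈ ((Submodule.span ℂ (⇑e '' A)).topologicalClosure)ᗮ := by
    have hle : (Submodule.span ℂ (⇑e '' A)).topologicalClosure ≤
        (Submodule.span ℂ (⇑e '' A))ᗮᗮ :=
      Submodule.topologicalClosure_minimal _ (Submodule.le_orthogonal_orthogonal _)
        (Submodule.isClosed_orthogonal _)
    exact (Submodule.orthogonal_le hle) ((Submodule.le_orthogonal_orthogonal _) h1)
  rw [projSpan, ContinuousLinearMap.comp_apply,
    Submodule.orthogonalProjectionOnto_apply_of_mem_orthogonal h2, map_zero]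



/-- Involution of `ℤ` swapping the residue classes of `a` and `d` mod 2 (shifting). -/
def swap2 (a d : Fin 2) : ℤ ≃ ℤ where
  toFun p := if p % 2 = (a : ℕ) then p - (a : ℕ) + (d : ℕ)
    else if p % 2 = (d : ℕ) then p - (d : ℕ) + (a : ℕ) else p
  invFun p := if p % 2 = (a : ℕ) then p - (a : ℕ) + (d : ℕ)
    else if p % 2 = (d : ℕ) then p - (d : ℕ) + (a : ℕ) else p
  left_inv p := by
    have ha := a.isLt; have hd := d.isLt
    dsimp only; split_ifs <;> omega
  right_inv p := by
    have ha := a.isLt; have hd := d.isLt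
    dsimp only; split_ifs <;> omega

def swap3 (a d : Fin 3) : ℤ ≃ ℤ where
  toFun p := if p % 3 = (a : ℕ) then p - (a : ℕ) + (d : ℕ)
    else if p % 3 = (d : ℕ) then p - (d : ℕ) + (a : ℕ) else p
  invFun p := if p % 3 = (a : ℕ) then p - (a : ℕ) + (d : ℕ)
    else if p % 3 = (d : ℕ) then p - (d : ℕ) + (a : ℕ) else p
  left_inv p := by
    have ha := a.isLt; have hd := d.isLt
    dsimp only; split_ifs <;> omega
  right_inv p := by
    have ha := a.isLt; have hd := d.isLt
    dsimp only; split_ifs <;> omega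

/-- The point `(2n + a₁, 3m + a₂)`. -/
def pt (a : Fin 2 × Fin 3) (n m : ℤ) : ℤ × ℤ :=
  (2 * n + ((a.1 : ℕ) : ℤ), 3 * m + ((a.2 : ℕ) : ℤ))

def sigmaFull (a d : Fin 2 × Fin 3) : (ℤ × ℤ) ≃ (ℤ × ℤ) :=
  (swap2 a.1 d.1).prodCongr (swap3 a.2 d.2)

lemma sigmaFull_pt (a d : Fin 2 × Fin 3) (n m : ℤ) :
    sigmaFull a d (pt a n m) = pt d n m := by
  have h1 := a.1.isLt; have h2 := a.2.isLt
  have : (2 * n + ((a.1 : ℕ) : ℤ)) % 2 = (a.1 : ℕ) := by omega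
  have : (3 * m + ((a.2 : ℕ) : ℤ)) % 3 = (a.2 : ℕ) := by omega
  simp only [sigmaFull, Equiv.prodCongr_apply, pt, Prod.map, swap2, swap3,
    Equiv.coe_fn_mk]
  rw [Prod.mk.injEq]
  constructor <;> { split_ifs <;> omega }

lemma exists_decomp (p : ℤ × ℤ) :
    ∃ (a : Fin 2 × Fin 3) (n m : ℤ), p = pt a n m := by
  refine ⟨(⟨(p.1 % 2).toNat, by omega⟩, ⟨(p.2 % 3).toNat, by omega⟩), p.1 / 2, p.2 / 3, ?_⟩
  simp only [pt]
  ext <;> simp <;> omega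

lemma pt_mem_class (a b : Fin 2 × Fin 3) (n m : ℤ) :
    ((pt a n m).1 % 2 = ((b.1 : ℕ) : ℤ) ∧ (pt a n m).2 % 3 = ((b.2 : ℕ) : ℤ)) ↔ a = b := by
  have := a.1.isLt; have := a.2.isLt; have := b.1.isLt; have := b.2.isLt
  simp only [pt]
  constructor
  · rintro ⟨h1, h2⟩
    ext
    · omega
    · omega
  · rintro rfl; constructor <;> omega

lemma pt_eq_iff (a b : Fin 2 × Fin 3) (n m n' m' : ℤ) :
    pt a n m = pt b n' m' ↔ a = b ∧ n = n' ∧ m = m' := by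
  have := a.1.isLt; have := a.2.isLt; have := b.1.isLt; have := b.2.isLt
  simp only [pt, Prod.mk.injEq]
  constructor
  · rintro ⟨h1, h2⟩
    refine ⟨?_, by omega, by omega⟩
    ext <;> omega
  · rintro ⟨rfl, rfl, rfl⟩; exact ⟨rfl, rfl⟩



def czM (a d : Fin 2 × Fin 3) : ℂ :=
  (-1 : ℂ) ^ (((a.1 : ℕ) - (d.1 : ℕ)) + ((a.2 : ℕ) - (d.2 : ℕ))) *
    (Nat.choose a.1 d.1 : ℂ) * (Nat.choose a.2 d.2 : ℂ)

def cwM (a d : Fin 2 × Fin 3) : ℂ :=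
  (Nat.choose d.1 a.1 : ℂ) * (Nat.choose d.2 a.2 : ℂ)

lemma cwM_conj (a d : Fin 2 × Fin 3) : (starRingEnd ℂ) (cwM a d) = cwM a d := by
  simp [cwM]

lemma P2 (a b : Fin 2) :
    ∑ d : Fin 2, (-1 : ℂ) ^ ((a : ℕ) - (d : ℕ)) * (Nat.choose a d : ℂ) *
      (Nat.choose d b : ℂ) = if a = b then 1 else 0 := by
  fin_cases a <;> fin_cases b <;> simp [Fin.sum_univ_two] <;> norm_num

lemma P3 (a b : Fin 3) :
    ∑ d : Fin 3, (-1 : ℂ) ^ ((a : ℕ) - (d : ℕ)) * (Nat.choose a d : ℂ) *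
      (Nat.choose d b : ℂ) = if a = b then 1 else 0 := by
  fin_cases a <;> fin_cases b <;> simp [Fin.sum_univ_three] <;> norm_num

lemma Q2 (a b : Fin 2) :
    ∑ d : Fin 2, (Nat.choose a d : ℂ) * ((-1 : ℂ) ^ ((d : ℕ) - (b : ℕ)) *
      (Nat.choose d b : ℂ)) = if a = b then 1 else 0 := by
  fin_cases a <;> fin_cases b <;> simp [Fin.sum_univ_two] <;> norm_num

lemma Q3 (a b : Fin 3) :
    ∑ d : Fin 3, (Nat.choose a d : ℂ) * ((-1 : ℂ) ^ ((d : ℕ) - (b : ℕ)) *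
      (Nat.choose d b : ℂ)) = if a = b then 1 else 0 := by
  fin_cases a <;> fin_cases b <;> simp [Fin.sum_univ_three] <;> norm_num

lemma H3 (a b : Fin 2 × Fin 3) :
    ∑ d : Fin 2 × Fin 3, czM a d * cwM b d = if a = b then 1 else 0 := by
  have : ∑ d : Fin 2 × Fin 3, czM a d * cwM b d =
      (∑ d1 : Fin 2, (-1 : ℂ) ^ ((a.1 : ℕ) - (d1 : ℕ)) * (Nat.choose a.1 d1 : ℂ) *
        (Nat.choose d1 b.1 : ℂ)) *
      (∑ d2 : Fin 3, (-1 : ℂ) ^ ((a.2 : ℕ) - (d2 : ℕ)) * (Nat.choose a.2 d2 : ℂ) *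
        (Nat.choose d2 b.2 : ℂ)) := by
    rw [Finset.sum_mul_sum, Fintype.sum_prod_type]
    refine Finset.sum_congr rfl fun d1 _ => Finset.sum_congr rfl fun d2 _ => ?_
    simp only [czM, cwM, pow_add]
    ring
  rw [this, P2, P3]
  by_cases h1 : a.1 = b.1 <;> by_cases h2 : a.2 = b.2 <;> simp [Prod.ext_iff, h1, h2]

lemma H4 (a b : Fin 2 × Fin 3) :
    ∑ d : Fin 2 × Fin 3, cwM d a * czM d b = if a = b then 1 else 0 := by
  have : ∑ d : Fin 2 × Fin 3, cwM d a * czM d b =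
      (∑ d1 : Fin 2, (Nat.choose a.1 d1 : ℂ) * ((-1 : ℂ) ^ ((d1 : ℕ) - (b.1 : ℕ)) *
        (Nat.choose d1 b.1 : ℂ))) *
      (∑ d2 : Fin 3, (Nat.choose a.2 d2 : ℂ) * ((-1 : ℂ) ^ ((d2 : ℕ) - (b.2 : ℕ)) *
        (Nat.choose d2 b.2 : ℂ))) := by
    rw [Finset.sum_mul_sum, Fintype.sum_prod_type]
    refine Finset.sum_congr rfl fun d1 _ => Finset.sum_congr rfl fun d2 _ => ?_
    simp only [czM, cwM, pow_add]
    ring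
  rw [this, Q2, Q3]
  by_cases h1 : a.1 = b.1 <;> by_cases h2 : a.2 = b.2 <;> simp [Prod.ext_iff, h1, h2]

section Block
variable {H : Type*} [NormedAddCommGroup H] [InnerProductSpace ℂ H] [CompleteSpace H]

def classSet (a : Fin 2 × Fin 3) : Set (ℤ × ℤ) :=
  {p | p.1 % 2 = ((a.1 : ℕ) : ℤ) ∧ p.2 % 3 = ((a.2 : ℕ) : ℤ)}

/-- The block operator associated with a coefficient matrix `c`. -/
def Sc (e : HilbertBasis (ℤ × ℤ) ℂ H) (c : (Fin 2 × Fin 3) → (Fin 2 × Fin 3) → ℂ) :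
    H →L[ℂ] H :=
  ∑ a : Fin 2 × Fin 3, ∑ d : Fin 2 × Fin 3,
    c a d • (((basisEquiv e (reindexB e (sigmaFull a d))) : H →L[ℂ] H).comp
      (projSpan e (classSet a)))

lemma Sc_apply_basis (e : HilbertBasis (ℤ × ℤ) ℂ H)
    (c : (Fin 2 × Fin 3) → (Fin 2 × Fin 3) → ℂ) (a : Fin 2 × Fin 3) (n m : ℤ) :
    Sc e c (e (pt a n m)) = ∑ d : Fin 2 × Fin 3, c a d • e (pt d n m) := by
  have hproj : ∀ b : Fin 2 × Fin 3,
      projSpan e (classSet b) (e (pt a n m)) = if a = b then e (pt a n m) else 0 := by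
    intro b
    by_cases h : a = b
    · rw [if_pos h]
      exact projSpan_apply_mem e _ ((pt_mem_class a b n m).mpr h)
    · rw [if_neg h]
      exact projSpan_apply_not_mem e _ (fun hm => h ((pt_mem_class a b n m).mp hm))
  rw [Sc, ContinuousLinearMap.sum_apply]
  rw [Finset.sum_eq_single a]
  · rw [ContinuousLinearMap.sum_apply]
    refine Finset.sum_congr rfl fun d _ => ?_
    rw [ContinuousLinearMap.smul_apply, ContinuousLinearMap.comp_apply, hproj a, if_pos rfl,
      ContinuousLinearEquiv.coe_coe, basisEquiv_apply, reindexB_apply, sigmaFull_pt]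
  · intro b _ hb
    rw [ContinuousLinearMap.sum_apply]
    refine Finset.sum_eq_zero fun d _ => ?_
    rw [ContinuousLinearMap.smul_apply, ContinuousLinearMap.comp_apply, hproj b,
      if_neg (fun h => hb h.symm)]
    simp
  · intro h; exact absurd (Finset.mem_univ a) h

lemma Sc_comp_eq_id (e : HilbertBasis (ℤ × ℤ) ℂ H)
    (cA cB : (Fin 2 × Fin 3) → (Fin 2 × Fin 3) → ℂ)
    (h : ∀ a b, ∑ d : Fin 2 × Fin 3, cA a d * cB d b = if a = b then 1 else 0) (x : H) :
    Sc e cB (Sc e cA x) = x := by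
  have : (Sc e cB).comp (Sc e cA) = ContinuousLinearMap.id ℂ H := by
    have hs : Dense ((Submodule.span ℂ (Set.range ⇑e)) : Set H) :=
      Submodule.dense_iff_topologicalClosure_eq_top.mpr e.dense_span
    apply ContinuousLinearMap.ext_on hs
    rintro y ⟨p, rfl⟩
    obtain ⟨a, n, m, rfl⟩ := exists_decomp p
    rw [ContinuousLinearMap.comp_apply, ContinuousLinearMap.id_apply, Sc_apply_basis,
      map_sum]
    have : ∀ d : Fin 2 × Fin 3, Sc e cB (cA a d • e (pt d n m)) =
        ∑ d' : Fin 2 × Fin 3, (cA a d * cB d d') • e (pt d' n m) := by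
      intro d
      rw [map_smul, Sc_apply_basis, Finset.smul_sum]
      exact Finset.sum_congr rfl fun d' _ => by rw [smul_smul]
    rw [Finset.sum_congr rfl fun d _ => this d, Finset.sum_comm]
    have : ∀ d' : Fin 2 × Fin 3,
        (∑ d : Fin 2 × Fin 3, (cA a d * cB d d') • e (pt d' n m)) =
          (if a = d' then (1 : ℂ) else 0) • e (pt d' n m) := by
      intro d'
      rw [← Finset.sum_smul, h a d']
    rw [Finset.sum_congr rfl fun d' _ => this d']
    simp

  exact DFunLike.congr_fun this x

lemma exists_block_equiv (e : HilbertBasis (ℤ × ℤ) ℂ H)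
    (c c' : (Fin 2 × Fin 3) → (Fin 2 × Fin 3) → ℂ)
    (h1 : ∀ a b, ∑ d : Fin 2 × Fin 3, c a d * c' d b = if a = b then 1 else 0)
    (h2 : ∀ a b, ∑ d : Fin 2 × Fin 3, c' a d * c d b = if a = b then 1 else 0) :
    ∃ S : H ≃L[ℂ] H, ∀ (a : Fin 2 × Fin 3) (n m : ℤ),
      S (e (pt a n m)) = ∑ d : Fin 2 × Fin 3, c a d • e (pt d n m) := by
  refine ⟨ContinuousLinearEquiv.equivOfInverse (Sc e c) (Sc e c')
    (fun x => Sc_comp_eq_id e c c' h1 x) (fun x => Sc_comp_eq_id e c' c h2 x),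
    fun a n m => ?_⟩
  rw [ContinuousLinearEquiv.equivOfInverse_apply, Sc_apply_basis]

end Block

section Main
variable {H : Type*} [NormedAddCommGroup H] [InnerProductSpace ℂ H] [CompleteSpace H]

def phi : (Fin 2 × Fin 3) × (ℤ × ℤ) ≃ ℤ × ℤ where
  toFun i := pt i.1 i.2.1 i.2.2
  invFun p := ((⟨(p.1 % 2).toNat, by omega⟩, ⟨(p.2 % 3).toNat, by omega⟩), (p.1 / 2, p.2 / 3))
  left_inv := by
    rintro ⟨⟨a1, a2⟩, n, m⟩
    have h1 := a1.isLt; have h2 := a2.isLt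
    simp only [pt, Prod.mk.injEq]
    refine ⟨⟨?_, ?_⟩, ?_, ?_⟩
    · ext; simp; omega
    · ext; simp; omega
    · omega
    · omega
  right_inv p := by
    simp only [pt]
    rw [Prod.ext_iff]
    constructor <;> · simp; omega

lemma isRieszBasis_block (x : ℤ × ℤ → H) (hx : IsRieszBasis x)
    (c c' : (Fin 2 × Fin 3) → (Fin 2 × Fin 3) → ℂ)
    (h1 : ∀ a b, ∑ d : Fin 2 × Fin 3, c a d * c' d b = if a = b then 1 else 0)
    (h2 : ∀ a b, ∑ d : Fin 2 × Fin 3, c' a d * c d b = if a = b then 1 else 0) :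
    IsRieszBasis (fun i : (Fin 2 × Fin 3) × (ℤ × ℤ) =>
      ∑ d : Fin 2 × Fin 3, c i.1 d • x (pt d i.2.1 i.2.2)) := by
  obtain ⟨e, T, hT⟩ := hx
  obtain ⟨S, hS⟩ := exists_block_equiv e c c' h1 h2
  refine ⟨reindexB e phi, S.trans T, fun i => ?_⟩
  rw [ContinuousLinearEquiv.trans_apply, reindexB_apply]
  show _ = T (S (e (pt i.1 i.2.1 i.2.2)))
  rw [hS, map_sum]
  exact Finset.sum_congr rfl fun d _ => by rw [map_smul, hT]

lemma hasSum_of_biorthogonal {ι : Type*} (x y : ι → H) (hx : IsRieszBasis x)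
    (hbi : ∀ i j, ⟪x i, y j⟫ = if i = j then (1 : ℂ) else 0) (f : H) :
    HasSum (fun i => ⟪f, y i⟫ • x i) f := by
  obtain ⟨e, T, hT⟩ := hx
  set B : H →L[ℂ] H := (T.symm : H →L[ℂ] H) with hB
  set yt : ι → H := fun i => ContinuousLinearMap.adjoint B (e i) with hyt
  have step1 : ∀ g : H, HasSum (fun i => (inner ℂ (yt i) g : ℂ) • x i) g := by
    intro g
    have h0 := e.hasSum_repr (T.symm g)
    have h1 := (T : H →L[ℂ] H).hasSum h0
    have hco : ∀ i, (T : H →L[ℂ] H) (e.repr (T.symm g) i • e i) =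
        (inner ℂ (yt i) g : ℂ) • x i := by
      intro i
      rw [map_smul, hT i, e.repr_apply_apply, hyt]
      congr 1
      rw [ContinuousLinearMap.adjoint_inner_left]
      simp [hB]
    simp only [hco] at h1
    simpa using h1
  have hytbi : ∀ i j, (inner ℂ (yt j) (x i) : ℂ) = if i = j then 1 else 0 := by
    intro i j
    rw [hyt]
    rw [ContinuousLinearMap.adjoint_inner_left, hT i]
    simp only [hB, ContinuousLinearEquiv.coe_coe, ContinuousLinearEquiv.symm_apply_apply]
    rw [orthonormal_iff_ite.mp e.orthonormal j i]
    simp [eq_comm]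
  have hy : ∀ j, y j = yt j := by
    intro j
    have hd : ∀ i, (inner ℂ (y j - yt j) (x i) : ℂ) = 0 := by
      intro i
      rw [inner_sub_left, hytbi]
      have := hbi i j
      rw [this]
      ring
    have hsum := step1 (y j - yt j)
    have h2 := (innerSL ℂ (y j - yt j)).hasSum hsum
    have hz : ∀ i, innerSL ℂ (y j - yt j) ((inner ℂ (yt i) (y j - yt j) : ℂ) • x i) = 0 := by
      intro i
      simp only [innerSL_apply_apply, inner_smul_right, hd, mul_zero]
    simp only [hz] at h2
    have : (inner ℂ (y j - yt j) (y j - yt j) : ℂ) = 0 := h2.unique hasSum_zero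
    have := inner_self_eq_zero.mp this
    rwa [sub_eq_zero] at this
  have := step1 f
  simpa only [← hy] using this

end Main

section Conv
variable {H : Type*} [NormedAddCommGroup H] [InnerProductSpace ℂ H]

lemma zconv (u : ℤ × ℤ → H) (k : Fin 2) (k' : Fin 3) (n m : ℤ) :
    (∑ j ∈ Finset.range ((k : ℕ) + 1), ∑ j' ∈ Finset.range ((k' : ℕ) + 1),
        ((-1 : ℂ) ^ (((k : ℕ) - j) + ((k' : ℕ) - j')) *
          (Nat.choose k j : ℂ) * (Nat.choose k' j' : ℂ)) •
            u (2 * n + (j : ℤ), 3 * m + (j' : ℤ)))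
    = ∑ d : Fin 2 × Fin 3, czM (k, k') d • u (pt d n m) := by
  fin_cases k <;> fin_cases k' <;>
    · simp [czM, pt, Fintype.sum_prod_type, Fin.sum_univ_succ, Finset.sum_range_succ]
      try norm_num
      try abel

lemma wconv (v : ℤ × ℤ → H) (k : Fin 2) (k' : Fin 3) (n m : ℤ) :
    (∑ j ∈ Finset.Icc (k : ℕ) 1, ∑ j' ∈ Finset.Icc (k' : ℕ) 2,
        ((Nat.choose j k : ℂ) * (Nat.choose j' k' : ℂ)) •
          v (2 * n + (j : ℤ), 3 * m + (j' : ℤ)))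
    = ∑ d : Fin 2 × Fin 3, cwM (k, k') d • v (pt d n m) := by
  have e01 : Finset.Icc (0:ℕ) 1 = {0, 1} := rfl
  have e11 : Finset.Icc (1:ℕ) 1 = {1} := rfl
  have e02 : Finset.Icc (0:ℕ) 2 = {0, 1, 2} := rfl
  have e12 : Finset.Icc (1:ℕ) 2 = {1, 2} := rfl
  have e22 : Finset.Icc (2:ℕ) 2 = {2} := rfl
  fin_cases k <;> fin_cases k' <;>
    · simp [cwM, pt, Fintype.sum_prod_type, Fin.sum_univ_succ, e01, e11, e02, e12, e22,
        Finset.sum_insert, Finset.sum_pair]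
      try norm_num
      try abel

end Conv

end Aux

theorem stmt19 {H : Type*} [NormedAddCommGroup H] [InnerProductSpace ℂ H]
    [CompleteSpace H] [TopologicalSpace.SeparableSpace H]
    (u v : ℤ × ℤ → H) (huv : IsDualRieszBasisPair u v)
    (z w : (Fin 2 × Fin 3) × (ℤ × ℤ) → H)
    (hz : ∀ (k : Fin 2) (k' : Fin 3) (n m : ℤ), z ((k, k'), (n, m)) =
      ∑ j ∈ Finset.range ((k : ℕ) + 1), ∑ j' ∈ Finset.range ((k' : ℕ) + 1),
        ((-1 : ℂ) ^ (((k : ℕ) - j) + ((k' : ℕ) - j')) *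
          (Nat.choose k j : ℂ) * (Nat.choose k' j' : ℂ)) •
            u (2 * n + (j : ℤ), 3 * m + (j' : ℤ)))
    (hw : ∀ (k : Fin 2) (k' : Fin 3) (n m : ℤ), w ((k, k'), (n, m)) =
      ∑ j ∈ Finset.Icc (k : ℕ) 1, ∑ j' ∈ Finset.Icc (k' : ℕ) 2,
        ((Nat.choose j k : ℂ) * (Nat.choose j' k' : ℂ)) •
          v (2 * n + (j : ℤ), 3 * m + (j' : ℤ))) :
    IsDualRieszBasisPair z w ∧
      ∀ f : H, HasSum (fun i : (Fin 2 × Fin 3) × (ℤ × ℤ) => ⟪f, z i⟫ • w i) f := by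
  obtain ⟨hu, hv, hbiuv, -⟩ := huv
  have z_eq : ∀ i : (Fin 2 × Fin 3) × (ℤ × ℤ),
      z i = ∑ d : Fin 2 × Fin 3, czM i.1 d • u (pt d i.2.1 i.2.2) := by
    rintro ⟨⟨k, k'⟩, n, m⟩
    rw [hz k k' n m, zconv]
  have w_eq : ∀ i : (Fin 2 × Fin 3) × (ℤ × ℤ),
      w i = ∑ d : Fin 2 × Fin 3, cwM i.1 d • v (pt d i.2.1 i.2.2) := by
    rintro ⟨⟨k, k'⟩, n, m⟩
    rw [hw k k' n m, wconv]
  have hzR : IsRieszBasis z := by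
    have := isRieszBasis_block u hu czM (fun p q => cwM q p)
      (fun a b => H3 a b) (fun a b => H4 a b)
    rwa [show (fun i : (Fin 2 × Fin 3) × (ℤ × ℤ) =>
      ∑ d : Fin 2 × Fin 3, czM i.1 d • u (pt d i.2.1 i.2.2)) = z
        from funext fun i => (z_eq i).symm] at this
  have hwR : IsRieszBasis w := by
    have h1 : ∀ a b, ∑ d : Fin 2 × Fin 3, cwM a d * czM b d = if a = b then 1 else 0 := by
      intro a b
      rw [Finset.sum_congr rfl fun d _ => mul_comm (cwM a d) (czM b d), H3 b a]
      simp [eq_comm]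
    have h2 : ∀ a b, ∑ d : Fin 2 × Fin 3, czM d a * cwM d b = if a = b then 1 else 0 := by
      intro a b
      rw [Finset.sum_congr rfl fun d _ => mul_comm (czM d a) (cwM d b), H4 b a]
      simp [eq_comm]
    have := isRieszBasis_block v hv cwM (fun p q => czM q p)
      (fun a b => h1 a b) (fun a b => h2 a b)
    rwa [show (fun i : (Fin 2 × Fin 3) × (ℤ × ℤ) =>
      ∑ d : Fin 2 × Fin 3, cwM i.1 d • v (pt d i.2.1 i.2.2)) = w
        from funext fun i => (w_eq i).symm] at this
  have hbizw : ∀ i j : (Fin 2 × Fin 3) × (ℤ × ℤ),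
      ⟪z i, w j⟫ = @ite ℂ (i = j) (Classical.propDecidable _) (1 : ℂ) 0 := by
    rintro ⟨a, n, m⟩ ⟨b, n', m'⟩
    rw [z_eq, w_eq]
    simp only
    rw [sum_inner]
    simp only [inner_smul_left, inner_sum, inner_smul_right, cwM_conj]
    have hered : ∀ p q : ℤ × ℤ, (inner ℂ (v q) (u p) : ℂ) = if p = q then 1 else 0 := by
      intro p q
      rw [hbiuv p q]
      congr
    simp only [hered, pt_eq_iff]
    by_cases hnm : n = n' ∧ m = m'
    · obtain ⟨rfl, rfl⟩ := hnm
      simp only [and_true, mul_ite, mul_one, mul_zero, Finset.sum_ite_eq', Finset.mem_univ,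
        if_true]
      rw [H3 a b]
      by_cases hab : a = b <;> simp [hab, Prod.ext_iff]
    · have hfalse : ∀ d d' : Fin 2 × Fin 3,
          (if d = d' ∧ n = n' ∧ m = m' then (1 : ℂ) else 0) = 0 := by
        intro d d'; rw [if_neg]; tauto
      simp only [hfalse, mul_zero, Finset.sum_const_zero]
      rw [if_neg (show ¬((a, (n, m)) = (b, (n', m'))) by
        simp only [Prod.mk.injEq, not_and]; tauto)]
  have hbiwz : ∀ i j : (Fin 2 × Fin 3) × (ℤ × ℤ),
      ⟪w i, z j⟫ = @ite ℂ (i = j) (Classical.propDecidable _) (1 : ℂ) 0 := by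
    intro i j
    rw [← inner_conj_symm, hbizw j i]
    by_cases hij : i = j <;> simp [hij, eq_comm]
  exact ⟨⟨hzR, hwR, hbizw, fun f => hasSum_of_biorthogonal z w hzR hbizw f⟩,
    fun f => hasSum_of_biorthogonal w z hwR hbiwz f⟩
end
end
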